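/- arXiv:2009.10009 — 2 statements merged into one kernel-verified Lean document; each statement's English description precedes it below -/
import Mathlib

section
/- If α (a vector of positive reals indexed by V) satisfies Ncond for the aggregated matching graph G_x, then the mean populations of the two models coincide: Q(G_yz, β) = Q(G_x, α). -/
open Classical Finset

noncomputable section

def nbr {V : Type} [Fintype V] (G : SimpleGraph V) (S : Finset V) : Finset V :=
  Finset.univ.filter fun j => ∃ i ∈ S, G.Adj i j

def aSum {V : Type} (α : V → ℝ) (S : Finset V) : ℝ := ∑ i ∈ S, α i

def IsIndep {V : Type} (G : SimpleGraph V) (I : Finset V) : Prop :=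
  I.Nonempty ∧ ∀ i ∈ I, ∀ j ∈ I, ¬ G.Adj i j

def indepSets {V : Type} [Fintype V] (G : SimpleGraph V) : Finset (Finset V) :=
  Finset.univ.filter fun I => IsIndep G I

def Ncond {V : Type} [Fintype V] (G : SimpleGraph V) (α : V → ℝ) : Prop :=
  ∀ I ∈ indepSets G, aSum α I < aSum α (nbr G I)

def Tlist {V : Type} [Fintype V] [DecidableEq V] (G : SimpleGraph V) (α : V → ℝ) :
    List V → Finset V → ℝ
  | [], _ => 1
  | i :: l, P =>
      α i / (aSum α (nbr G (insert i P)) - aSum α (insert i P)) * Tlist G α l (insert i P)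

def Erat {V : Type} [Fintype V] [DecidableEq V] (G : SimpleGraph V) (α : V → ℝ) :
    List V → Finset V → ℝ
  | [], _ => 0
  | i :: l, P =>
      aSum α (nbr G (insert i P)) / (aSum α (nbr G (insert i P)) - aSum α (insert i P)) +
        Erat G α l (insert i P)

def TI {V : Type} [Fintype V] [DecidableEq V] (G : SimpleGraph V) (α : V → ℝ) (I : Finset V) : ℝ :=
  ∑ l ∈ I.toList.permutations.toFinset, Tlist G α l ∅

def EI {V : Type} [Fintype V] [DecidableEq V] (G : SimpleGraph V) (α : V → ℝ) (I : Finset V) : ℝ :=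
  ∑ l ∈ I.toList.permutations.toFinset, Erat G α l ∅ * Tlist G α l ∅

def meanQ {V : Type} [Fintype V] [DecidableEq V] (G : SimpleGraph V) (α : V → ℝ) : ℝ :=
  (1 + ∑ I ∈ indepSets G, TI G α I)⁻¹ * ∑ I ∈ indepSets G, EI G α I

def IsWord {V : Type} (G : SimpleGraph V) (w : List V) : Prop :=
  w.Pairwise fun a b => ¬ G.Adj a b

def piHatAux {V : Type} [Fintype V] [DecidableEq V] (G : SimpleGraph V) (α : V → ℝ) :
    List V → Finset V → ℝ
  | [], _ => 1
  | i :: l, P => α i / aSum α (nbr G (insert i P)) * piHatAux G α l (insert i P)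

def piHat {V : Type} [Fintype V] [DecidableEq V] (G : SimpleGraph V) (α : V → ℝ) (w : List V) : ℝ :=
  piHatAux G α w ∅

def addEdge {V : Type} (G : SimpleGraph V) (u v : V) : SimpleGraph V :=
  G ⊔ SimpleGraph.fromEdgeSet {s(u, v)}

end

def psiMap {V : Type} (x : V) : V ⊕ Unit → V := Sum.elim id fun _ => x

def Gyz {V : Type} (G : SimpleGraph V) (x : V) : SimpleGraph (V ⊕ Unit) :=
  SimpleGraph.comap (psiMap x) G

noncomputable def betaArr {V : Type} [DecidableEq V] (α : V → ℝ) (x : V) (by_ bz : ℝ) :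
    V ⊕ Unit → ℝ :=
  Sum.elim (fun v => if v = x then by_ else α v) fun _ => bz

noncomputable section

-- ===== L1 =====
lemma perm_toList_iff {W : Type} [DecidableEq W] (I : Finset W) (w : List W) :
    w.Perm I.toList ↔ (↑w : Multiset W) = I.val := by
  rw [← I.coe_toList, Multiset.coe_eq_coe]

lemma perms_eq_biUnion {W : Type} [DecidableEq W] (I : Finset W) (hI : I.Nonempty) :
    I.toList.permutations.toFinset =
      I.biUnion fun i => ((I.erase i).toList.permutations.toFinset).image (i :: ·) := by
  ext w
  simp only [List.mem_toFinset, List.mem_permutations, Finset.mem_biUnion, Finset.mem_image,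
    perm_toList_iff]
  constructor
  · intro h
    match w with
    | [] =>
      exfalso
      have h2 : I.val = 0 := h.symm
      simp [Finset.val_eq_zero] at h2
      exact hI.ne_empty h2
    | i :: t =>
      have hi : i ∈ I := by
        rw [← Finset.mem_val, ← h]; simp
      refine ⟨i, hi, t, ?_, rfl⟩
      have h3 : (↑(i :: t) : Multiset W) = i ::ₘ ↑t := rfl
      rw [h3] at h
      rw [Finset.erase_val, ← h, Multiset.erase_cons_head]
  · rintro ⟨i, hi, t, ht, rfl⟩
    have h3 : (↑(i :: t) : Multiset W) = i ::ₘ ↑t := rfl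
    rw [h3, ht, Finset.erase_val, Multiset.cons_erase (Finset.mem_def.1 hi)]

lemma sum_perms_peel {W : Type} [DecidableEq W] (f : List W → ℝ) (I : Finset W) (hI : I.Nonempty) :
    ∑ w ∈ I.toList.permutations.toFinset, f w
      = ∑ i ∈ I, ∑ t ∈ (I.erase i).toList.permutations.toFinset, f (i :: t) := by
  rw [perms_eq_biUnion I hI, Finset.sum_biUnion]
  · refine Finset.sum_congr rfl fun i _ => ?_
    rw [Finset.sum_image]
    intro a _ b _ hab
    simpa using hab
  · intro i _ j _ hij
    simp only [Finset.disjoint_left, Finset.mem_image]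
    rintro w ⟨a, _, rfl⟩ ⟨b, _, hb⟩
    have := congrArg List.head? hb
    simp at this
    exact hij this.symm

-- ===== defs =====
variable {W : Type} [Fintype W] [DecidableEq W]

def cand (H : SimpleGraph W) (P : Finset W) : Finset W := univ \ (P ∪ nbr H P)

def Ind (H : SimpleGraph W) (P : Finset W) : Prop := ∀ i ∈ P, ∀ j ∈ P, ¬ H.Adj i j

def FP (H : SimpleGraph W) (P : Finset W) : Finset (Finset W) :=
  (indepSets H).filter (· ⊆ cand H P)

def GS (H : SimpleGraph W) (w : W → ℝ) (P : Finset W) : ℝ :=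
  1 + ∑ I ∈ FP H P, ∑ l ∈ I.toList.permutations.toFinset, Tlist H w l P

def ES (H : SimpleGraph W) (w : W → ℝ) (P : Finset W) : ℝ :=
  ∑ I ∈ FP H P, ∑ l ∈ I.toList.permutations.toFinset, Erat H w l P * Tlist H w l P

lemma mem_nbr {H : SimpleGraph W} {S : Finset W} {j : W} :
    j ∈ nbr H S ↔ ∃ i ∈ S, H.Adj i j := by simp [nbr]

lemma mem_cand {H : SimpleGraph W} {P : Finset W} {i : W} :
    i ∈ cand H P ↔ i ∉ P ∧ ∀ j ∈ P, ¬ H.Adj j i := by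
  simp [cand, mem_nbr, not_or]

lemma mem_FP {H : SimpleGraph W} {P I : Finset W} :
    I ∈ FP H P ↔ (I.Nonempty ∧ ∀ i ∈ I, ∀ j ∈ I, ¬ H.Adj i j) ∧ I ⊆ cand H P := by
  rw [FP, Finset.mem_filter, indepSets, Finset.mem_filter]
  simp only [Finset.mem_univ, true_and, IsIndep]

lemma FP_empty_iff {H : SimpleGraph W} {P : Finset W} : (∅ : Finset W) ∉ FP H P := by
  simp [mem_FP]

lemma cand_insert_subset {H : SimpleGraph W} {P : Finset W} {i : W} :
    cand H (insert i P) ⊆ (cand H P).erase i := by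
  intro j hj
  rw [mem_cand] at hj
  rw [Finset.mem_erase, mem_cand]
  refine ⟨fun h => hj.1 (h ▸ Finset.mem_insert_self i P), fun h => hj.1 (Finset.mem_insert_of_mem h),
    fun k hk => hj.2 k (Finset.mem_insert_of_mem hk)⟩

-- the sigma reindexing
lemma sum_FP_peel (H : SimpleGraph W) (f : W → List W → ℝ) (P : Finset W) :
    ∑ I ∈ FP H P, ∑ i ∈ I, ∑ t ∈ (I.erase i).toList.permutations.toFinset, f i t
      = ∑ i ∈ cand H P,
          (f i [] + ∑ J ∈ FP H (insert i P), ∑ t ∈ J.toList.permutations.toFinset, f i t) := by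
  have hperm_empty : ((∅ : Finset W).toList.permutations.toFinset : Finset (List W)) = {[]} := by
    simp
  have hRHS : ∀ i, (f i [] + ∑ J ∈ FP H (insert i P), ∑ t ∈ J.toList.permutations.toFinset, f i t)
      = ∑ J ∈ insert (∅ : Finset W) (FP H (insert i P)),
          ∑ t ∈ J.toList.permutations.toFinset, f i t := by
    intro i
    rw [Finset.sum_insert FP_empty_iff, hperm_empty, Finset.sum_singleton]
  simp only [hRHS]
  rw [← Finset.sum_sigma (FP H P) (fun I => I)
      (fun x => ∑ t ∈ (x.1.erase x.2).toList.permutations.toFinset, f x.2 t),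
    ← Finset.sum_sigma (cand H P) (fun i => insert (∅ : Finset W) (FP H (insert i P)))
      (fun x => ∑ t ∈ x.2.toList.permutations.toFinset, f x.1 t)]
  refine Finset.sum_bij' (fun x _ => (⟨x.2, x.1.erase x.2⟩ : (_ : W) × Finset W))
    (fun x _ => (⟨insert x.1 x.2, x.1⟩ : (_ : Finset W) × W)) ?_ ?_ ?_ ?_ ?_
  · -- forward membership
    rintro ⟨I, i⟩ hmem
    rw [Finset.mem_sigma] at hmem
    obtain ⟨hI, hi⟩ := hmem
    rw [mem_FP] at hI
    rw [Finset.mem_sigma]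
    constructor
    · exact hI.2 hi
    · show I.erase i ∈ insert ∅ (FP H (insert i P))
      rcases Finset.eq_empty_or_nonempty (I.erase i) with he | hne
      · rw [he]; exact Finset.mem_insert_self _ _
      · refine Finset.mem_insert_of_mem ?_
        rw [mem_FP]
        refine ⟨⟨hne, fun a ha b hb => hI.1.2 a (Finset.mem_of_mem_erase ha) b (Finset.mem_of_mem_erase hb)⟩, ?_⟩
        intro j hj
        rw [Finset.mem_erase] at hj
        have hjc := hI.2 hj.2
        rw [mem_cand] at hjc ⊢
        refine ⟨?_, ?_⟩
        · intro hmem2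
          rcases Finset.mem_insert.1 hmem2 with h | h
          · exact hj.1 h
          · exact hjc.1 h
        · intro k hk
          rcases Finset.mem_insert.1 hk with h | h
          · subst h; exact hI.1.2 k hi j hj.2
          · exact hjc.2 k h
  · -- backward membership
    rintro ⟨i, J⟩ hmem
    rw [Finset.mem_sigma] at hmem
    obtain ⟨hi, hJ⟩ := hmem
    have hiJ : i ∉ J := by
      rcases Finset.mem_insert.1 hJ with h | h
      · subst h; simp
      · rw [mem_FP] at h
        intro hcon
        have := h.2 hcon
        rw [mem_cand] at this
        exact this.1 (Finset.mem_insert_self i P)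
    rw [Finset.mem_sigma]
    refine ⟨?_, Finset.mem_insert_self i J⟩
    rw [mem_FP]
    rcases Finset.mem_insert.1 hJ with h | h
    · subst h
      rw [mem_cand] at hi
      refine ⟨⟨⟨i, by simp⟩, ?_⟩, ?_⟩
      · intro a ha b hb
        simp only [Finset.mem_insert, Finset.notMem_empty, or_false] at ha hb
        subst ha; subst hb; exact H.irrefl
      · intro j hj
        simp only [Finset.mem_insert, Finset.notMem_empty, or_false] at hj
        subst hj; rw [mem_cand]; exact hi
    · rw [mem_FP] at h
      refine ⟨⟨Finset.insert_nonempty _ _, ?_⟩, ?_⟩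
      · intro a ha b hb
        rcases Finset.mem_insert.1 ha with rfl | ha' <;> rcases Finset.mem_insert.1 hb with rfl | hb'
        · exact H.irrefl
        · have := h.2 hb'
          rw [mem_cand] at this
          exact fun hc => this.2 a (Finset.mem_insert_self a P) hc
        · have := h.2 ha'
          rw [mem_cand] at this
          intro hc
          exact this.2 b (Finset.mem_insert_self b P) (H.adj_symm hc)
        · exact h.1.2 a ha' b hb'
      · intro j hj
        rcases Finset.mem_insert.1 hj with rfl | hj'
        · exact hi
        · have := h.2 hj'
          rw [mem_cand] at this ⊢
          refine ⟨fun hc => this.1 (Finset.mem_insert_of_mem hc), fun k hk => this.2 k (Finset.mem_insert_of_mem hk)⟩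
  · -- left inverse
    rintro ⟨I, i⟩ hmem
    rw [Finset.mem_sigma] at hmem
    simp only
    congr 1
    exact Finset.insert_erase hmem.2
  · -- right inverse
    rintro ⟨i, J⟩ hmem
    rw [Finset.mem_sigma] at hmem
    have hiJ : i ∉ J := by
      rcases Finset.mem_insert.1 hmem.2 with h | h
      · subst h; simp
      · rw [mem_FP] at h
        intro hcon
        have := h.2 hcon
        rw [mem_cand] at this
        exact this.1 (Finset.mem_insert_self i P)
    simp only
    congr 1
    exact Finset.erase_insert hiJ
  · -- values
    rintro ⟨I, i⟩ _
    rfl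

lemma GS_rec (H : SimpleGraph W) (w : W → ℝ) (P : Finset W) :
    GS H w P = 1 + ∑ i ∈ cand H P,
      w i / (aSum w (nbr H (insert i P)) - aSum w (insert i P)) * GS H w (insert i P) := by
  unfold GS
  congr 1
  have h1 : ∀ I ∈ FP H P, ∑ l ∈ I.toList.permutations.toFinset, Tlist H w l P
      = ∑ i ∈ I, ∑ t ∈ (I.erase i).toList.permutations.toFinset, Tlist H w (i :: t) P := by
    intro I hI
    exact sum_perms_peel _ I ((mem_FP.1 hI).1.1)
  rw [Finset.sum_congr rfl h1, sum_FP_peel H (fun i t => Tlist H w (i :: t) P) P]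
  refine Finset.sum_congr rfl fun i _ => ?_
  have ht : ∀ t, Tlist H w (i :: t) P
      = w i / (aSum w (nbr H (insert i P)) - aSum w (insert i P)) * Tlist H w t (insert i P) :=
    fun t => rfl
  simp only [ht, Tlist, ← Finset.mul_sum]
  ring


lemma ES_rec (H : SimpleGraph W) (w : W → ℝ) (P : Finset W) :
    ES H w P = ∑ i ∈ cand H P,
      w i / (aSum w (nbr H (insert i P)) - aSum w (insert i P)) *
        (aSum w (nbr H (insert i P)) / (aSum w (nbr H (insert i P)) - aSum w (insert i P)) *
            GS H w (insert i P)
          + ES H w (insert i P)) := by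
  unfold ES
  have h1 : ∀ I ∈ FP H P, ∑ l ∈ I.toList.permutations.toFinset, Erat H w l P * Tlist H w l P
      = ∑ i ∈ I, ∑ t ∈ (I.erase i).toList.permutations.toFinset,
          Erat H w (i :: t) P * Tlist H w (i :: t) P := by
    intro I hI
    exact sum_perms_peel _ I ((mem_FP.1 hI).1.1)
  rw [Finset.sum_congr rfl h1, sum_FP_peel H (fun i t => Erat H w (i :: t) P * Tlist H w (i :: t) P) P]
  refine Finset.sum_congr rfl fun i _ => ?_
  set N := aSum w (nbr H (insert i P)) with hN
  set D := aSum w (nbr H (insert i P)) - aSum w (insert i P) with hD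
  have ht : ∀ t, Erat H w (i :: t) P * Tlist H w (i :: t) P
      = N / D * (w i / D) * Tlist H w t (insert i P)
        + w i / D * (Erat H w t (insert i P) * Tlist H w t (insert i P)) := by
    intro t
    show (N / D + Erat H w t (insert i P)) * (w i / D * Tlist H w t (insert i P)) = _
    ring
  simp only [ht, Finset.sum_add_distrib, ← Finset.mul_sum]
  unfold GS
  simp only [Erat, Tlist]
  ring

section Decomp
variable {V : Type} [Fintype V] [DecidableEq V]

lemma nbr_Gyz (G : SimpleGraph V) (x : V) (S : Finset (V ⊕ Unit)) :
    nbr (Gyz G x) S = univ.filter (fun j => psiMap x j ∈ nbr G (S.image (psiMap x))) := by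
  ext j
  simp only [nbr, Finset.mem_filter, Finset.mem_univ, true_and, Finset.mem_image]
  constructor
  · rintro ⟨i, hi, ha⟩
    exact ⟨psiMap x i, ⟨i, hi, rfl⟩, ha⟩
  · rintro ⟨v, ⟨i, hi, rfl⟩, ha⟩
    exact ⟨i, hi, ha⟩

variable (G : SimpleGraph V) (α : V → ℝ) (x : V) (by_ bz : ℝ)

lemma aSum_beta_filter (hyz : by_ + bz = α x) (T : Finset V) :
    aSum (betaArr α x by_ bz) (univ.filter (fun j => psiMap x j ∈ T)) = aSum α T := by
  classical
  rw [aSum, Finset.sum_filter, Fintype.sum_sum_type]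
  have h1 : ∀ a : V, (if psiMap x (Sum.inl a) ∈ T then betaArr α x by_ bz (Sum.inl a) else 0)
      = (if a ∈ T then (if a = x then by_ else α a) else 0) := by
    intro a; rfl
  have h2 : ∀ u : Unit, (if psiMap x (Sum.inr u) ∈ T then betaArr α x by_ bz (Sum.inr u) else 0)
      = (if x ∈ T then bz else 0) := by
    intro u; rfl
  simp only [h1, h2]
  rw [Finset.sum_ite_mem, Finset.univ_inter, Finset.sum_const]
  simp only [Finset.card_univ, Fintype.card_unit, one_smul]
  by_cases hx : x ∈ T
  · rw [← Finset.sum_erase_add T _ hx, if_pos rfl, if_pos hx, aSum,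
      ← Finset.sum_erase_add T _ hx]
    have : ∀ a ∈ T.erase x, (if a = x then by_ else α a) = α a := by
      intro a ha
      rw [if_neg (Finset.ne_of_mem_erase ha)]
    rw [Finset.sum_congr rfl this]
    linarith
  · rw [if_neg hx, add_zero, aSum]
    refine Finset.sum_congr rfl fun a ha => ?_
    rw [if_neg]
    intro h; exact hx (h ▸ ha)

lemma aSum_nbr_Gyz (hyz : by_ + bz = α x) (S : Finset (V ⊕ Unit)) :
    aSum (betaArr α x by_ bz) (nbr (Gyz G x) S) = aSum α (nbr G (S.image (psiMap x))) := by
  rw [nbr_Gyz, aSum_beta_filter α x by_ bz hyz]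

lemma aSum_image_inl_of_not_mem (P : Finset V) (hx : x ∉ P) :
    aSum (betaArr α x by_ bz) (P.image Sum.inl) = aSum α P := by
  rw [aSum, Finset.sum_image (fun a _ b _ h => Sum.inl.inj h), aSum]
  refine Finset.sum_congr rfl fun a ha => ?_
  have : a ≠ x := fun h => hx (h ▸ ha)
  simp [betaArr, this]

lemma aSum_image_inl_of_mem (hyz : by_ + bz = α x) (P : Finset V) (hx : x ∈ P) :
    aSum (betaArr α x by_ bz) (P.image Sum.inl) = aSum α P - bz := by
  rw [aSum, Finset.sum_image (fun a _ b _ h => Sum.inl.inj h), aSum,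
    ← Finset.sum_erase_add P _ hx, ← Finset.sum_erase_add P α hx]
  have h1 : ∀ a ∈ P.erase x, betaArr α x by_ bz (Sum.inl a) = α a := by
    intro a ha
    simp [betaArr, Finset.ne_of_mem_erase ha]
  have h2 : betaArr α x by_ bz (Sum.inl x) = by_ := by simp [betaArr]
  rw [Finset.sum_congr rfl h1, h2]
  linarith

def stB (P : Finset V) : Finset (V ⊕ Unit) := insert (Sum.inr ()) (P.image Sum.inl)

def stZ (P : Finset V) : Finset (V ⊕ Unit) := insert (Sum.inr ()) ((P.erase x).image Sum.inl)

lemma inr_not_mem_image (P : Finset V) : Sum.inr () ∉ P.image Sum.inl := by simp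

lemma aSum_erase (P : Finset V) (hx : x ∈ P) : aSum α (P.erase x) = aSum α P - α x := by
  rw [aSum, aSum, ← Finset.sum_erase_add P α hx]; ring

lemma aSum_stB (hyz : by_ + bz = α x) (P : Finset V) (hx : x ∈ P) :
    aSum (betaArr α x by_ bz) (stB P) = aSum α P := by
  rw [stB, aSum, Finset.sum_insert (inr_not_mem_image P)]
  have h1 : betaArr α x by_ bz (Sum.inr ()) = bz := rfl
  have h2 := aSum_image_inl_of_mem α x by_ bz hyz P hx
  rw [h1, ← aSum] at *
  rw [h2]; ring

lemma aSum_stZ (hyz : by_ + bz = α x) (P : Finset V) (hx : x ∈ P) :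
    aSum (betaArr α x by_ bz) (stZ x P) = aSum α P - by_ := by
  rw [stZ, aSum, Finset.sum_insert (inr_not_mem_image _)]
  have h1 : betaArr α x by_ bz (Sum.inr ()) = bz := rfl
  have h2 := aSum_image_inl_of_not_mem α x by_ bz (P.erase x) (Finset.notMem_erase x P)
  rw [h1, ← aSum, h2, aSum_erase α x P hx]
  linarith

lemma image_psi_inl (P : Finset V) : (P.image Sum.inl).image (psiMap x) = P := by
  rw [Finset.image_image]
  have : (psiMap x ∘ Sum.inl : V → V) = id := rfl
  rw [this, Finset.image_id]

lemma image_psi_stB (P : Finset V) (hx : x ∈ P) : (stB P).image (psiMap x) = P := by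
  rw [stB, Finset.image_insert, image_psi_inl]
  have : psiMap x (Sum.inr ()) = x := rfl
  rw [this, Finset.insert_eq_self.2 hx]

lemma image_psi_stZ (P : Finset V) (hx : x ∈ P) : (stZ x P).image (psiMap x) = P := by
  rw [stZ, Finset.image_insert, image_psi_inl]
  have : psiMap x (Sum.inr ()) = x := rfl
  rw [this, Finset.insert_erase hx]

lemma mem_cand_Gyz {G : SimpleGraph V} {S : Finset (V ⊕ Unit)} {j : V ⊕ Unit} :
    j ∈ cand (Gyz G x) S ↔ j ∉ S ∧ ∀ w ∈ S.image (psiMap x), ¬ G.Adj w (psiMap x j) := by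
  rw [mem_cand]
  refine and_congr_right fun _ => ?_
  constructor
  · rintro h w hw
    rw [Finset.mem_image] at hw
    obtain ⟨i, hi, rfl⟩ := hw
    exact h i hi
  · intro h i hi
    exact h (psiMap x i) (Finset.mem_image_of_mem _ hi)

-- state insertion lemmas
lemma insert_inl_image (i : V) (P : Finset V) :
    insert (Sum.inl i) (P.image Sum.inl) = ((insert i P).image Sum.inl : Finset (V ⊕ Unit)) :=
  (Finset.image_insert _ _ _).symm

lemma insert_inl_stB (i : V) (P : Finset V) :
    insert (Sum.inl i) (stB P) = stB (insert i P) := by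
  rw [stB, stB, Finset.insert_comm, insert_inl_image]

lemma insert_inr_image (P : Finset V) : insert (Sum.inr ()) (P.image Sum.inl) = stB P := rfl

lemma insert_inl_stZ (i : V) (P : Finset V) (hix : i ≠ x) :
    insert (Sum.inl i) (stZ x P) = stZ x (insert i P) := by
  rw [stZ, stZ, Finset.insert_comm, insert_inl_image, Finset.erase_insert_of_ne hix]

lemma insert_inlx_stZ (P : Finset V) (hx : x ∈ P) :
    insert (Sum.inl x) (stZ x P) = stB P := by
  rw [stZ, stB, Finset.insert_comm, insert_inl_image, Finset.insert_erase hx]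

lemma insert_inr_image' (P : Finset V) (hx : x ∉ P) :
    insert (Sum.inr ()) (P.image Sum.inl) = stZ x (insert x P) := by
  rw [stZ, Finset.erase_insert hx]

-- cand correspondences
lemma cand_stB (G : SimpleGraph V) (P : Finset V) (hx : x ∈ P) :
    cand (Gyz G x) (stB P) = (cand G P).image Sum.inl := by
  ext j
  cases j with
  | inl v =>
    rw [mem_cand_Gyz x, image_psi_stB x P hx]
    have h1 : (Sum.inl v ∈ stB P) ↔ v ∈ P := by simp [stB]
    have h2 : psiMap x (Sum.inl v) = v := rfl
    rw [h1, h2]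
    simp only [Finset.mem_image, Sum.inl.injEq]
    rw [show (∃ a ∈ cand G P, a = v) ↔ v ∈ cand G P by simp, mem_cand]
  | inr u =>
    cases u
    have h1 : Sum.inr () ∈ stB P := Finset.mem_insert_self _ _
    simp only [mem_cand_Gyz x, h1, Finset.mem_image]
    simp

lemma cand_stY (G : SimpleGraph V) (P : Finset V) (hx : x ∈ P)
    (hP : ∀ i ∈ P, ∀ j ∈ P, ¬ G.Adj i j) :
    cand (Gyz G x) (P.image Sum.inl) = insert (Sum.inr ()) ((cand G P).image Sum.inl) := by
  ext j
  cases j with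
  | inl v =>
    rw [mem_cand_Gyz x, image_psi_inl x P]
    have h1 : (Sum.inl v ∈ (P.image Sum.inl : Finset (V ⊕ Unit))) ↔ v ∈ P := by simp
    have h2 : psiMap x (Sum.inl v) = v := rfl
    rw [h1, h2]
    simp only [Finset.mem_insert, Finset.mem_image, Sum.inl.injEq, reduceCtorEq, false_or]
    rw [show (∃ a ∈ cand G P, a = v) ↔ v ∈ cand G P by simp, mem_cand]
  | inr u =>
    cases u
    rw [mem_cand_Gyz x, image_psi_inl x P]
    have h2 : psiMap x (Sum.inr ()) = x := rfl
    rw [h2]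
    simp only [Finset.mem_insert, true_or, iff_true, inr_not_mem_image, not_false_iff, true_and]
    intro w hw
    exact hP w hw x hx

lemma cand_stZ (G : SimpleGraph V) (P : Finset V) (hx : x ∈ P)
    (hP : ∀ i ∈ P, ∀ j ∈ P, ¬ G.Adj i j) :
    cand (Gyz G x) (stZ x P) = insert (Sum.inl x) ((cand G P).image Sum.inl) := by
  ext j
  cases j with
  | inl v =>
    rw [mem_cand_Gyz x, image_psi_stZ x P hx]
    have h1 : (Sum.inl v ∈ stZ x P) ↔ v ∈ P.erase x := by simp [stZ]
    have h2 : psiMap x (Sum.inl v) = v := rfl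
    rw [h1, h2]
    by_cases hvx : v = x
    · subst hvx
      simp only [Finset.mem_erase, ne_eq, not_true_eq_false, false_and, not_false_iff, true_and,
        Finset.mem_insert, Sum.inl.injEq, true_or, iff_true]
      intro w hw
      exact hP w hw v hx
    · simp only [Finset.mem_erase, hvx, ne_eq, not_false_iff, true_and, Finset.mem_insert,
        Sum.inl.injEq, Finset.mem_image]
      rw [false_or, show (∃ a ∈ cand G P, a = v) ↔ v ∈ cand G P by simp, mem_cand]
  | inr u =>
    cases u
    have h1 : Sum.inr () ∈ stZ x P := Finset.mem_insert_self _ _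
    simp only [mem_cand_Gyz x, h1, not_true_eq_false, false_and, false_iff, Finset.mem_insert,
      Finset.mem_image]
    simp

lemma cand_stP_of_mem (G : SimpleGraph V) (P : Finset V) (hx : x ∉ P) (hxc : x ∈ cand G P) :
    cand (Gyz G x) (P.image Sum.inl) = insert (Sum.inr ()) ((cand G P).image Sum.inl) := by
  ext j
  cases j with
  | inl v =>
    rw [mem_cand_Gyz x, image_psi_inl x P]
    have h1 : (Sum.inl v ∈ (P.image Sum.inl : Finset (V ⊕ Unit))) ↔ v ∈ P := by simp
    have h2 : psiMap x (Sum.inl v) = v := rfl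
    rw [h1, h2]
    simp only [Finset.mem_insert, Finset.mem_image, Sum.inl.injEq, reduceCtorEq, false_or]
    rw [show (∃ a ∈ cand G P, a = v) ↔ v ∈ cand G P by simp, mem_cand]
  | inr u =>
    cases u
    rw [mem_cand_Gyz x, image_psi_inl x P]
    have h2 : psiMap x (Sum.inr ()) = x := rfl
    rw [h2]
    rw [mem_cand] at hxc
    simp only [Finset.mem_insert, true_or, iff_true, inr_not_mem_image, not_false_iff, true_and]
    exact hxc.2

lemma cand_stP_of_not_mem (G : SimpleGraph V) (P : Finset V) (hx : x ∉ P) (hxc : x ∉ cand G P) :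
    cand (Gyz G x) (P.image Sum.inl) = (cand G P).image Sum.inl := by
  ext j
  cases j with
  | inl v =>
    rw [mem_cand_Gyz x, image_psi_inl x P]
    have h1 : (Sum.inl v ∈ (P.image Sum.inl : Finset (V ⊕ Unit))) ↔ v ∈ P := by simp
    have h2 : psiMap x (Sum.inl v) = v := rfl
    rw [h1, h2]
    simp only [Finset.mem_image, Sum.inl.injEq]
    rw [show (∃ a ∈ cand G P, a = v) ↔ v ∈ cand G P by simp, mem_cand]
  | inr u =>
    cases u
    rw [mem_cand_Gyz x, image_psi_inl x P]
    have h2 : psiMap x (Sum.inr ()) = x := rfl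
    rw [h2]
    simp only [inr_not_mem_image, not_false_iff, true_and, Finset.mem_image, reduceCtorEq,
      and_false, exists_false, iff_false]
    intro hall
    exact hxc (mem_cand.2 ⟨hx, hall⟩)

-- independence / positivity
lemma Ind_insert {G : SimpleGraph V} {P : Finset V} {i : V}
    (hP : ∀ a ∈ P, ∀ b ∈ P, ¬ G.Adj a b) (hi : i ∈ cand G P) :
    ∀ a ∈ insert i P, ∀ b ∈ insert i P, ¬ G.Adj a b := by
  rw [mem_cand] at hi
  intro a ha b hb
  rcases Finset.mem_insert.1 ha with rfl | ha' <;> rcases Finset.mem_insert.1 hb with rfl | hb'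
  · exact G.irrefl
  · exact fun hc => hi.2 b hb' (G.adj_symm hc)
  · exact hi.2 a ha'
  · exact hP a ha' b hb'

lemma Dpos {G : SimpleGraph V} {α : V → ℝ} (hN : Ncond G α) {P : Finset V}
    (hP : ∀ a ∈ P, ∀ b ∈ P, ¬ G.Adj a b) (hne : P.Nonempty) :
    0 < aSum α (nbr G P) - aSum α P := by
  have : P ∈ indepSets G := by
    rw [indepSets, Finset.mem_filter]
    exact ⟨Finset.mem_univ _, hne, hP⟩
  linarith [hN P this]

lemma key_field2 (a d c g : ℝ) (hd : d ≠ 0) (hdc : d + c ≠ 0) :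
    a / (d + c) * ((d + c) / d * g) = a / d * g := by
  field_simp

lemma key_field (a n d c g e : ℝ) (hd : d ≠ 0) (hdc : d + c ≠ 0) :
    a / (d + c) * (n / (d + c) * ((d + c) / d * g) + ((d + c) / d * e + c * n / d ^ 2 * g))
      = a / d * (n / d * g + e) := by
  field_simp
  ring

lemma card_cand_insert_le {G : SimpleGraph V} {P : Finset V} {i : V} {n : ℕ}
    (hi : i ∈ cand G P) (hc : (cand G P).card ≤ n + 1) :
    (cand G (insert i P)).card ≤ n := by
  have h1 := Finset.card_le_card (cand_insert_subset (H := G) (P := P) (i := i))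
  rw [Finset.card_erase_of_mem hi] at h1
  omega

lemma claimA (hyz : by_ + bz = α x) :
    ∀ n : ℕ, ∀ P : Finset V, (cand G P).card ≤ n → (∀ a ∈ P, ∀ b ∈ P, ¬ G.Adj a b) → x ∈ P →
      GS (Gyz G x) (betaArr α x by_ bz) (stB P) = GS G α P ∧
      ES (Gyz G x) (betaArr α x by_ bz) (stB P) = ES G α P := by
  intro n
  induction n with
  | zero =>
    intro P hc hP hx
    have hce : cand G P = ∅ := Finset.card_eq_zero.1 (Nat.le_zero.1 hc)
    have hce' : cand (Gyz G x) (stB P) = ∅ := by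
      rw [cand_stB x G P hx, hce, Finset.image_empty]
    rw [GS_rec (Gyz G x), GS_rec G α P, ES_rec (Gyz G x), ES_rec G α P, hce, hce']
    simp
  | succ n ih =>
    intro P hc hP hx
    set β := betaArr α x by_ bz with hβ
    have hterm : ∀ j ∈ cand G P,
        β (Sum.inl j) / (aSum β (nbr (Gyz G x) (insert (Sum.inl j) (stB P)))
            - aSum β (insert (Sum.inl j) (stB P)))
          = α j / (aSum α (nbr G (insert j P)) - aSum α (insert j P)) := by
      intro i hi
      have hix : i ≠ x := fun h => (mem_cand.1 hi).1 (h ▸ hx)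
      have hb : β (Sum.inl i) = α i := by simp [hβ, betaArr, hix]
      rw [insert_inl_stB i P, hb,
        aSum_stB α x by_ bz hyz (insert i P) (Finset.mem_insert_of_mem hx),
        aSum_nbr_Gyz G α x by_ bz hyz, image_psi_stB x (insert i P) (Finset.mem_insert_of_mem hx)]
    have hIH : ∀ j ∈ cand G P,
        GS (Gyz G x) β (stB (insert j P)) = GS G α (insert j P) ∧
        ES (Gyz G x) β (stB (insert j P)) = ES G α (insert j P) := by
      intro i hi
      exact ih (insert i P) (card_cand_insert_le hi hc) (Ind_insert hP hi)
        (Finset.mem_insert_of_mem hx)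
    constructor
    · rw [GS_rec (Gyz G x), GS_rec G α P, cand_stB x G P hx,
        Finset.sum_image (fun a _ b _ h => Sum.inl.inj h)]
      congr 1
      refine Finset.sum_congr rfl fun i hi => ?_
      rw [hterm i hi, insert_inl_stB i P, (hIH i hi).1]
    · rw [ES_rec (Gyz G x), ES_rec G α P, cand_stB x G P hx,
        Finset.sum_image (fun a _ b _ h => Sum.inl.inj h)]
      refine Finset.sum_congr rfl fun i hi => ?_
      rw [hterm i hi, insert_inl_stB i P, (hIH i hi).1, (hIH i hi).2,
        aSum_nbr_Gyz G α x by_ bz hyz, image_psi_stB x (insert i P) (Finset.mem_insert_of_mem hx),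
        aSum_stB α x by_ bz hyz (insert i P) (Finset.mem_insert_of_mem hx)]

lemma card_cand_insert_lt {G : SimpleGraph V} {P : Finset V} {i : V} {n : ℕ}
    (hi : i ∈ cand G P) (hc : (cand G P).card ≤ n) :
    (cand G (insert i P)).card < n := by
  have h1 := Finset.card_le_card (cand_insert_subset (H := G) (P := P) (i := i))
  rw [Finset.card_erase_of_mem hi] at h1
  have h2 : 0 < (cand G P).card := Finset.card_pos.2 ⟨i, hi⟩
  omega

lemma claimB (hyz : by_ + bz = α x) (hz : 0 < bz) (hN : Ncond G α) :
    ∀ n : ℕ, ∀ P : Finset V, (cand G P).card ≤ n → (∀ a ∈ P, ∀ b ∈ P, ¬ G.Adj a b) → x ∈ P →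
      GS (Gyz G x) (betaArr α x by_ bz) (P.image Sum.inl)
          = (aSum α (nbr G P) - aSum α P + bz) / (aSum α (nbr G P) - aSum α P) * GS G α P ∧
      ES (Gyz G x) (betaArr α x by_ bz) (P.image Sum.inl)
          = (aSum α (nbr G P) - aSum α P + bz) / (aSum α (nbr G P) - aSum α P) * ES G α P
            + bz * aSum α (nbr G P) / (aSum α (nbr G P) - aSum α P) ^ 2 * GS G α P := by
  intro n
  induction n using Nat.strong_induction_on with
  | _ n ih =>
  intro P hc hP hx
  set β := betaArr α x by_ bz with hβ
  have hDp : 0 < aSum α (nbr G P) - aSum α P := Dpos hN hP ⟨x, hx⟩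
  have hDp' : aSum α (nbr G P) - aSum α P ≠ 0 := ne_of_gt hDp
  have hA := claimA G α x by_ bz hyz (cand G P).card P le_rfl hP hx
  have hinr : (Sum.inr () : V ⊕ Unit) ∉ (cand G P).image Sum.inl := inr_not_mem_image _
  -- facts per candidate
  have hfacts : ∀ i ∈ cand G P, i ≠ x ∧ β (Sum.inl i) = α i ∧
      (0 < aSum α (nbr G (insert i P)) - aSum α (insert i P)) := by
    intro i hi
    have hix : i ≠ x := fun h => (mem_cand.1 hi).1 (h ▸ hx)
    refine ⟨hix, by simp [hβ, betaArr, hix], ?_⟩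
    exact Dpos hN (Ind_insert hP hi) ⟨x, Finset.mem_insert_of_mem hx⟩
  -- the inr transition facts
  have hinr_state : insert (Sum.inr ()) (P.image Sum.inl) = stB P := rfl
  have hinr_beta : β (Sum.inr ()) = bz := rfl
  have hnbrB : aSum β (nbr (Gyz G x) (stB P)) = aSum α (nbr G P) := by
    rw [hβ, aSum_nbr_Gyz G α x by_ bz hyz, image_psi_stB x P hx]
  have hsumB : aSum β (stB P) = aSum α P := aSum_stB α x by_ bz hyz P hx
  constructor
  · rw [GS_rec (Gyz G x), cand_stY x G P hx hP, Finset.sum_insert hinr,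
      Finset.sum_image (fun a _ b _ h => Sum.inl.inj h)]
    have hterm : ∀ i ∈ cand G P,
        β (Sum.inl i) / (aSum β (nbr (Gyz G x) (insert (Sum.inl i) (P.image Sum.inl)))
            - aSum β (insert (Sum.inl i) (P.image Sum.inl)))
          * GS (Gyz G x) β (insert (Sum.inl i) (P.image Sum.inl))
        = α i / (aSum α (nbr G (insert i P)) - aSum α (insert i P)) * GS G α (insert i P) := by
      intro i hi
      obtain ⟨hix, hb, hDi⟩ := hfacts i hi
      rw [insert_inl_image i P, hb, hβ, aSum_nbr_Gyz G α x by_ bz hyz, image_psi_inl x (insert i P),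
        aSum_image_inl_of_mem α x by_ bz hyz (insert i P) (Finset.mem_insert_of_mem hx), ← hβ,
        (ih (cand G (insert i P)).card (card_cand_insert_lt hi hc) (insert i P) le_rfl
          (Ind_insert hP hi) (Finset.mem_insert_of_mem hx)).1]
      have hrw : aSum α (nbr G (insert i P)) - (aSum α (insert i P) - bz)
          = aSum α (nbr G (insert i P)) - aSum α (insert i P) + bz := by ring
      rw [hrw]
      exact key_field2 _ _ _ _ (ne_of_gt hDi) (by linarith)
    rw [Finset.sum_congr rfl hterm, hinr_state, hinr_beta, hnbrB, hsumB, hA.1]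
    have hG : ∑ i ∈ cand G P,
        α i / (aSum α (nbr G (insert i P)) - aSum α (insert i P)) * GS G α (insert i P)
        = GS G α P - 1 := by rw [GS_rec G α P]; ring
    rw [hG]
    field_simp
    ring
  · rw [ES_rec (Gyz G x), cand_stY x G P hx hP, Finset.sum_insert hinr,
      Finset.sum_image (fun a _ b _ h => Sum.inl.inj h)]
    have hterm : ∀ i ∈ cand G P,
        β (Sum.inl i) / (aSum β (nbr (Gyz G x) (insert (Sum.inl i) (P.image Sum.inl)))
            - aSum β (insert (Sum.inl i) (P.image Sum.inl)))
          * (aSum β (nbr (Gyz G x) (insert (Sum.inl i) (P.image Sum.inl)))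
              / (aSum β (nbr (Gyz G x) (insert (Sum.inl i) (P.image Sum.inl)))
                - aSum β (insert (Sum.inl i) (P.image Sum.inl)))
              * GS (Gyz G x) β (insert (Sum.inl i) (P.image Sum.inl))
            + ES (Gyz G x) β (insert (Sum.inl i) (P.image Sum.inl)))
        = α i / (aSum α (nbr G (insert i P)) - aSum α (insert i P))
            * (aSum α (nbr G (insert i P)) / (aSum α (nbr G (insert i P)) - aSum α (insert i P))
                * GS G α (insert i P) + ES G α (insert i P)) := by
      intro i hi
      obtain ⟨hix, hb, hDi⟩ := hfacts i hi
      have hih := ih (cand G (insert i P)).card (card_cand_insert_lt hi hc) (insert i P) le_rfl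
          (Ind_insert hP hi) (Finset.mem_insert_of_mem hx)
      rw [insert_inl_image i P, hb, hβ, aSum_nbr_Gyz G α x by_ bz hyz, image_psi_inl x (insert i P),
        aSum_image_inl_of_mem α x by_ bz hyz (insert i P) (Finset.mem_insert_of_mem hx), ← hβ,
        hih.1, hih.2]
      have hrw : aSum α (nbr G (insert i P)) - (aSum α (insert i P) - bz)
          = aSum α (nbr G (insert i P)) - aSum α (insert i P) + bz := by ring
      rw [hrw]
      exact key_field _ _ _ _ _ _ (ne_of_gt hDi) (by linarith)
    rw [Finset.sum_congr rfl hterm, hinr_state, hinr_beta, hnbrB, hsumB, hA.1, hA.2]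
    have hE : ∑ i ∈ cand G P,
        α i / (aSum α (nbr G (insert i P)) - aSum α (insert i P))
          * (aSum α (nbr G (insert i P)) / (aSum α (nbr G (insert i P)) - aSum α (insert i P))
              * GS G α (insert i P) + ES G α (insert i P))
        = ES G α P := (ES_rec G α P).symm
    rw [hE]
    field_simp
    ring

lemma claimC (hyz : by_ + bz = α x) (hy : 0 < by_) (hN : Ncond G α) :
    ∀ n : ℕ, ∀ P : Finset V, (cand G P).card ≤ n → (∀ a ∈ P, ∀ b ∈ P, ¬ G.Adj a b) → x ∈ P →
      GS (Gyz G x) (betaArr α x by_ bz) (stZ x P)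
          = (aSum α (nbr G P) - aSum α P + by_) / (aSum α (nbr G P) - aSum α P) * GS G α P ∧
      ES (Gyz G x) (betaArr α x by_ bz) (stZ x P)
          = (aSum α (nbr G P) - aSum α P + by_) / (aSum α (nbr G P) - aSum α P) * ES G α P
            + by_ * aSum α (nbr G P) / (aSum α (nbr G P) - aSum α P) ^ 2 * GS G α P := by
  intro n
  induction n using Nat.strong_induction_on with
  | _ n ih =>
  intro P hc hP hx
  set β := betaArr α x by_ bz with hβ
  have hDp : 0 < aSum α (nbr G P) - aSum α P := Dpos hN hP ⟨x, hx⟩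
  have hDp' : aSum α (nbr G P) - aSum α P ≠ 0 := ne_of_gt hDp
  have hA := claimA G α x by_ bz hyz (cand G P).card P le_rfl hP hx
  have hinlx : (Sum.inl x : V ⊕ Unit) ∉ (cand G P).image Sum.inl := by
    simp only [Finset.mem_image, Sum.inl.injEq, not_exists, not_and]
    intro a ha hax
    exact (mem_cand.1 ha).1 (hax ▸ hx)
  have hfacts : ∀ i ∈ cand G P, i ≠ x ∧ β (Sum.inl i) = α i ∧
      (0 < aSum α (nbr G (insert i P)) - aSum α (insert i P)) := by
    intro i hi
    have hix : i ≠ x := fun h => (mem_cand.1 hi).1 (h ▸ hx)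
    refine ⟨hix, by simp [hβ, betaArr, hix], ?_⟩
    exact Dpos hN (Ind_insert hP hi) ⟨x, Finset.mem_insert_of_mem hx⟩
  have hx_state : insert (Sum.inl x) (stZ x P) = stB P := insert_inlx_stZ x P hx
  have hx_beta : β (Sum.inl x) = by_ := by simp [hβ, betaArr]
  have hnbrB : aSum β (nbr (Gyz G x) (stB P)) = aSum α (nbr G P) := by
    rw [hβ, aSum_nbr_Gyz G α x by_ bz hyz, image_psi_stB x P hx]
  have hsumB : aSum β (stB P) = aSum α P := aSum_stB α x by_ bz hyz P hx
  constructor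
  · rw [GS_rec (Gyz G x), cand_stZ x G P hx hP, Finset.sum_insert hinlx,
      Finset.sum_image (fun a _ b _ h => Sum.inl.inj h)]
    have hterm : ∀ i ∈ cand G P,
        β (Sum.inl i) / (aSum β (nbr (Gyz G x) (insert (Sum.inl i) (stZ x P)))
            - aSum β (insert (Sum.inl i) (stZ x P)))
          * GS (Gyz G x) β (insert (Sum.inl i) (stZ x P))
        = α i / (aSum α (nbr G (insert i P)) - aSum α (insert i P)) * GS G α (insert i P) := by
      intro i hi
      obtain ⟨hix, hb, hDi⟩ := hfacts i hi
      rw [insert_inl_stZ x i P hix, hb, hβ, aSum_nbr_Gyz G α x by_ bz hyz,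
        image_psi_stZ x (insert i P) (Finset.mem_insert_of_mem hx),
        aSum_stZ α x by_ bz hyz (insert i P) (Finset.mem_insert_of_mem hx), ← hβ,
        (ih (cand G (insert i P)).card (card_cand_insert_lt hi hc) (insert i P) le_rfl
          (Ind_insert hP hi) (Finset.mem_insert_of_mem hx)).1]
      have hrw : aSum α (nbr G (insert i P)) - (aSum α (insert i P) - by_)
          = aSum α (nbr G (insert i P)) - aSum α (insert i P) + by_ := by ring
      rw [hrw]
      exact key_field2 _ _ _ _ (ne_of_gt hDi) (by linarith)
    rw [Finset.sum_congr rfl hterm, hx_state, hx_beta, hnbrB, hsumB, hA.1]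
    have hG : ∑ i ∈ cand G P,
        α i / (aSum α (nbr G (insert i P)) - aSum α (insert i P)) * GS G α (insert i P)
        = GS G α P - 1 := by rw [GS_rec G α P]; ring
    rw [hG]
    field_simp
    ring
  · rw [ES_rec (Gyz G x), cand_stZ x G P hx hP, Finset.sum_insert hinlx,
      Finset.sum_image (fun a _ b _ h => Sum.inl.inj h)]
    have hterm : ∀ i ∈ cand G P,
        β (Sum.inl i) / (aSum β (nbr (Gyz G x) (insert (Sum.inl i) (stZ x P)))
            - aSum β (insert (Sum.inl i) (stZ x P)))
          * (aSum β (nbr (Gyz G x) (insert (Sum.inl i) (stZ x P)))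
              / (aSum β (nbr (Gyz G x) (insert (Sum.inl i) (stZ x P)))
                - aSum β (insert (Sum.inl i) (stZ x P)))
              * GS (Gyz G x) β (insert (Sum.inl i) (stZ x P))
            + ES (Gyz G x) β (insert (Sum.inl i) (stZ x P)))
        = α i / (aSum α (nbr G (insert i P)) - aSum α (insert i P))
            * (aSum α (nbr G (insert i P)) / (aSum α (nbr G (insert i P)) - aSum α (insert i P))
                * GS G α (insert i P) + ES G α (insert i P)) := by
      intro i hi
      obtain ⟨hix, hb, hDi⟩ := hfacts i hi
      have hih := ih (cand G (insert i P)).card (card_cand_insert_lt hi hc) (insert i P) le_rfl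
          (Ind_insert hP hi) (Finset.mem_insert_of_mem hx)
      rw [insert_inl_stZ x i P hix, hb, hβ, aSum_nbr_Gyz G α x by_ bz hyz,
        image_psi_stZ x (insert i P) (Finset.mem_insert_of_mem hx),
        aSum_stZ α x by_ bz hyz (insert i P) (Finset.mem_insert_of_mem hx), ← hβ,
        hih.1, hih.2]
      have hrw : aSum α (nbr G (insert i P)) - (aSum α (insert i P) - by_)
          = aSum α (nbr G (insert i P)) - aSum α (insert i P) + by_ := by ring
      rw [hrw]
      exact key_field _ _ _ _ _ _ (ne_of_gt hDi) (by linarith)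
    rw [Finset.sum_congr rfl hterm, hx_state, hx_beta, hnbrB, hsumB, hA.1, hA.2]
    have hE : ∑ i ∈ cand G P,
        α i / (aSum α (nbr G (insert i P)) - aSum α (insert i P))
          * (aSum α (nbr G (insert i P)) / (aSum α (nbr G (insert i P)) - aSum α (insert i P))
              * GS G α (insert i P) + ES G α (insert i P))
        = ES G α P := (ES_rec G α P).symm
    rw [hE]
    field_simp
    ring

lemma claimD (hyz : by_ + bz = α x) (hy : 0 < by_) (hz : 0 < bz) (hN : Ncond G α) :
    ∀ n : ℕ, ∀ P : Finset V, (cand G P).card ≤ n → (∀ a ∈ P, ∀ b ∈ P, ¬ G.Adj a b) → x ∉ P →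
      GS (Gyz G x) (betaArr α x by_ bz) (P.image Sum.inl) = GS G α P ∧
      ES (Gyz G x) (betaArr α x by_ bz) (P.image Sum.inl) = ES G α P := by
  intro n
  induction n using Nat.strong_induction_on with
  | _ n ih =>
  intro P hc hP hxP
  set β := betaArr α x by_ bz with hβ
  -- plain term rewriting, for i ∈ cand G P with i ≠ x
  have hterm1 : ∀ i ∈ cand G P, i ≠ x →
      β (Sum.inl i) / (aSum β (nbr (Gyz G x) (insert (Sum.inl i) (P.image Sum.inl)))
          - aSum β (insert (Sum.inl i) (P.image Sum.inl)))
        = α i / (aSum α (nbr G (insert i P)) - aSum α (insert i P)) := by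
    intro i hi hix
    have hb : β (Sum.inl i) = α i := by simp [hβ, betaArr, hix]
    have hxiP : x ∉ insert i P := by
      intro h
      rcases Finset.mem_insert.1 h with h | h
      · exact hix h.symm
      · exact hxP h
    rw [insert_inl_image i P, hb, hβ, aSum_nbr_Gyz G α x by_ bz hyz, image_psi_inl x (insert i P),
      aSum_image_inl_of_not_mem α x by_ bz (insert i P) hxiP]
  have hIH : ∀ i ∈ cand G P, i ≠ x →
      GS (Gyz G x) β ((insert i P).image Sum.inl) = GS G α (insert i P) ∧
      ES (Gyz G x) β ((insert i P).image Sum.inl) = ES G α (insert i P) := by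
    intro i hi hix
    have hxiP : x ∉ insert i P := by
      intro h
      rcases Finset.mem_insert.1 h with h | h
      · exact hix h.symm
      · exact hxP h
    exact ih (cand G (insert i P)).card (card_cand_insert_lt hi hc) (insert i P) le_rfl
      (Ind_insert hP hi) hxiP
  by_cases hxc : x ∈ cand G P
  · -- x is a candidate
    have hDx : 0 < aSum α (nbr G (insert x P)) - aSum α (insert x P) :=
      Dpos hN (Ind_insert hP hxc) ⟨x, Finset.mem_insert_self x P⟩
    have hB := claimB G α x by_ bz hyz hz hN (cand G (insert x P)).card (insert x P) le_rfl
      (Ind_insert hP hxc) (Finset.mem_insert_self x P)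
    have hCc := claimC G α x by_ bz hyz hy hN (cand G (insert x P)).card (insert x P) le_rfl
      (Ind_insert hP hxc) (Finset.mem_insert_self x P)
    have hinr : (Sum.inr () : V ⊕ Unit) ∉ (cand G P).image Sum.inl := inr_not_mem_image _
    have hnbrx : aSum β (nbr (Gyz G x) ((insert x P).image Sum.inl))
        = aSum α (nbr G (insert x P)) := by
      rw [hβ, aSum_nbr_Gyz G α x by_ bz hyz, image_psi_inl x (insert x P)]
    have hsumx : aSum β ((insert x P).image Sum.inl) = aSum α (insert x P) - bz :=
      aSum_image_inl_of_mem α x by_ bz hyz (insert x P) (Finset.mem_insert_self x P)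
    have hb_x : β (Sum.inl x) = by_ := by simp [hβ, betaArr]
    have hz_state : insert (Sum.inr ()) (P.image Sum.inl) = stZ x (insert x P) :=
      insert_inr_image' x P hxP
    have hb_inr : β (Sum.inr ()) = bz := rfl
    have hnbrz : aSum β (nbr (Gyz G x) (stZ x (insert x P))) = aSum α (nbr G (insert x P)) := by
      rw [hβ, aSum_nbr_Gyz G α x by_ bz hyz,
        image_psi_stZ x (insert x P) (Finset.mem_insert_self x P)]
    have hsumz : aSum β (stZ x (insert x P)) = aSum α (insert x P) - by_ :=
      aSum_stZ α x by_ bz hyz (insert x P) (Finset.mem_insert_self x P)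
    have hrwz : aSum α (nbr G (insert x P)) - (aSum α (insert x P) - by_)
        = aSum α (nbr G (insert x P)) - aSum α (insert x P) + by_ := by ring
    have hrwy : aSum α (nbr G (insert x P)) - (aSum α (insert x P) - bz)
        = aSum α (nbr G (insert x P)) - aSum α (insert x P) + bz := by ring
    constructor
    · rw [GS_rec (Gyz G x), cand_stP_of_mem x G P hxP hxc, Finset.sum_insert hinr,
        Finset.sum_image (fun a _ b _ h => Sum.inl.inj h),
        ← Finset.sum_erase_add (cand G P) _ hxc]
      have hterm : ∀ i ∈ (cand G P).erase x,
          β (Sum.inl i) / (aSum β (nbr (Gyz G x) (insert (Sum.inl i) (P.image Sum.inl)))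
              - aSum β (insert (Sum.inl i) (P.image Sum.inl)))
            * GS (Gyz G x) β (insert (Sum.inl i) (P.image Sum.inl))
          = α i / (aSum α (nbr G (insert i P)) - aSum α (insert i P)) * GS G α (insert i P) := by
        intro i hi
        have hix := Finset.ne_of_mem_erase hi
        have hi' := Finset.mem_of_mem_erase hi
        rw [hterm1 i hi' hix, insert_inl_image i P, (hIH i hi' hix).1]
      rw [Finset.sum_congr rfl hterm]
      -- x-cons term
      have hxterm :
          β (Sum.inl x) / (aSum β (nbr (Gyz G x) (insert (Sum.inl x) (P.image Sum.inl)))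
              - aSum β (insert (Sum.inl x) (P.image Sum.inl)))
            * GS (Gyz G x) β (insert (Sum.inl x) (P.image Sum.inl))
          = by_ / (aSum α (nbr G (insert x P)) - aSum α (insert x P)) * GS G α (insert x P) := by
        rw [insert_inl_image x P, hb_x, hnbrx, hsumx, hB.1, hrwy]
        exact key_field2 _ _ _ _ (ne_of_gt hDx) (by linarith)
      -- inr term
      have hzterm :
          β (Sum.inr ()) / (aSum β (nbr (Gyz G x) (insert (Sum.inr ()) (P.image Sum.inl)))
              - aSum β (insert (Sum.inr ()) (P.image Sum.inl)))
            * GS (Gyz G x) β (insert (Sum.inr ()) (P.image Sum.inl))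
          = bz / (aSum α (nbr G (insert x P)) - aSum α (insert x P)) * GS G α (insert x P) := by
        rw [hz_state, hb_inr, hnbrz, hsumz, hCc.1, hrwz]
        exact key_field2 _ _ _ _ (ne_of_gt hDx) (by linarith)
      rw [hxterm, hzterm, GS_rec G α P, ← Finset.sum_erase_add (cand G P) _ hxc]
      have : bz / (aSum α (nbr G (insert x P)) - aSum α (insert x P)) * GS G α (insert x P)
          + by_ / (aSum α (nbr G (insert x P)) - aSum α (insert x P)) * GS G α (insert x P)
          = α x / (aSum α (nbr G (insert x P)) - aSum α (insert x P)) * GS G α (insert x P) := by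
        rw [← hyz]; ring
      linarith [this]
    · rw [ES_rec (Gyz G x), cand_stP_of_mem x G P hxP hxc, Finset.sum_insert hinr,
        Finset.sum_image (fun a _ b _ h => Sum.inl.inj h),
        ← Finset.sum_erase_add (cand G P) _ hxc]
      have hterm : ∀ i ∈ (cand G P).erase x,
          β (Sum.inl i) / (aSum β (nbr (Gyz G x) (insert (Sum.inl i) (P.image Sum.inl)))
              - aSum β (insert (Sum.inl i) (P.image Sum.inl)))
            * (aSum β (nbr (Gyz G x) (insert (Sum.inl i) (P.image Sum.inl)))
                / (aSum β (nbr (Gyz G x) (insert (Sum.inl i) (P.image Sum.inl)))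
                  - aSum β (insert (Sum.inl i) (P.image Sum.inl)))
                * GS (Gyz G x) β (insert (Sum.inl i) (P.image Sum.inl))
              + ES (Gyz G x) β (insert (Sum.inl i) (P.image Sum.inl)))
          = α i / (aSum α (nbr G (insert i P)) - aSum α (insert i P))
              * (aSum α (nbr G (insert i P)) / (aSum α (nbr G (insert i P)) - aSum α (insert i P))
                  * GS G α (insert i P) + ES G α (insert i P)) := by
        intro i hi
        have hix := Finset.ne_of_mem_erase hi
        have hi' := Finset.mem_of_mem_erase hi
        have hb : β (Sum.inl i) = α i := by simp [hβ, betaArr, hix]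
        have hxiP : x ∉ insert i P := by
          intro h
          rcases Finset.mem_insert.1 h with h | h
          · exact hix h.symm
          · exact hxP h
        rw [insert_inl_image i P, hb, hβ, aSum_nbr_Gyz G α x by_ bz hyz,
          image_psi_inl x (insert i P),
          aSum_image_inl_of_not_mem α x by_ bz (insert i P) hxiP, ← hβ,
          (hIH i hi' hix).1, (hIH i hi' hix).2]
      rw [Finset.sum_congr rfl hterm]
      have hxterm :
          β (Sum.inl x) / (aSum β (nbr (Gyz G x) (insert (Sum.inl x) (P.image Sum.inl)))
              - aSum β (insert (Sum.inl x) (P.image Sum.inl)))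
            * (aSum β (nbr (Gyz G x) (insert (Sum.inl x) (P.image Sum.inl)))
                / (aSum β (nbr (Gyz G x) (insert (Sum.inl x) (P.image Sum.inl)))
                  - aSum β (insert (Sum.inl x) (P.image Sum.inl)))
                * GS (Gyz G x) β (insert (Sum.inl x) (P.image Sum.inl))
              + ES (Gyz G x) β (insert (Sum.inl x) (P.image Sum.inl)))
          = by_ / (aSum α (nbr G (insert x P)) - aSum α (insert x P))
              * (aSum α (nbr G (insert x P)) / (aSum α (nbr G (insert x P)) - aSum α (insert x P))
                  * GS G α (insert x P) + ES G α (insert x P)) := by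
        rw [insert_inl_image x P, hb_x, hnbrx, hsumx, hB.1, hB.2, hrwy]
        exact key_field _ _ _ _ _ _ (ne_of_gt hDx) (by linarith)
      have hzterm :
          β (Sum.inr ()) / (aSum β (nbr (Gyz G x) (insert (Sum.inr ()) (P.image Sum.inl)))
              - aSum β (insert (Sum.inr ()) (P.image Sum.inl)))
            * (aSum β (nbr (Gyz G x) (insert (Sum.inr ()) (P.image Sum.inl)))
                / (aSum β (nbr (Gyz G x) (insert (Sum.inr ()) (P.image Sum.inl)))
                  - aSum β (insert (Sum.inr ()) (P.image Sum.inl)))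
                * GS (Gyz G x) β (insert (Sum.inr ()) (P.image Sum.inl))
              + ES (Gyz G x) β (insert (Sum.inr ()) (P.image Sum.inl)))
          = bz / (aSum α (nbr G (insert x P)) - aSum α (insert x P))
              * (aSum α (nbr G (insert x P)) / (aSum α (nbr G (insert x P)) - aSum α (insert x P))
                  * GS G α (insert x P) + ES G α (insert x P)) := by
        rw [hz_state, hb_inr, hnbrz, hsumz, hCc.1, hCc.2, hrwz]
        exact key_field _ _ _ _ _ _ (ne_of_gt hDx) (by linarith)
      rw [hxterm, hzterm, ES_rec G α P, ← Finset.sum_erase_add (cand G P) _ hxc]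
      have : bz / (aSum α (nbr G (insert x P)) - aSum α (insert x P))
              * (aSum α (nbr G (insert x P)) / (aSum α (nbr G (insert x P)) - aSum α (insert x P))
                  * GS G α (insert x P) + ES G α (insert x P))
          + by_ / (aSum α (nbr G (insert x P)) - aSum α (insert x P))
              * (aSum α (nbr G (insert x P)) / (aSum α (nbr G (insert x P)) - aSum α (insert x P))
                  * GS G α (insert x P) + ES G α (insert x P))
          = α x / (aSum α (nbr G (insert x P)) - aSum α (insert x P))
              * (aSum α (nbr G (insert x P)) / (aSum α (nbr G (insert x P)) - aSum α (insert x P))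
                  * GS G α (insert x P) + ES G α (insert x P)) := by
        rw [← hyz]; ring
      linarith [this]
  · -- x is not a candidate
    constructor
    · rw [GS_rec (Gyz G x), cand_stP_of_not_mem x G P hxP hxc, GS_rec G α P,
        Finset.sum_image (fun a _ b _ h => Sum.inl.inj h)]
      congr 1
      refine Finset.sum_congr rfl fun i hi => ?_
      have hix : i ≠ x := fun h => hxc (h ▸ hi)
      rw [hterm1 i hi hix, insert_inl_image i P, (hIH i hi hix).1]
    · rw [ES_rec (Gyz G x), cand_stP_of_not_mem x G P hxP hxc, ES_rec G α P,
        Finset.sum_image (fun a _ b _ h => Sum.inl.inj h)]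
      refine Finset.sum_congr rfl fun i hi => ?_
      have hix : i ≠ x := fun h => hxc (h ▸ hi)
      have hxiP : x ∉ insert i P := by
        intro h
        rcases Finset.mem_insert.1 h with h | h
        · exact hix h.symm
        · exact hxP h
      have hb : β (Sum.inl i) = α i := by simp [hβ, betaArr, hix]
      rw [insert_inl_image i P, hb, hβ, aSum_nbr_Gyz G α x by_ bz hyz,
        image_psi_inl x (insert i P),
        aSum_image_inl_of_not_mem α x by_ bz (insert i P) hxiP, ← hβ,
        (hIH i hi hix).1, (hIH i hi hix).2]

end Decomp

lemma cand_empty {W : Type} [Fintype W] [DecidableEq W] (H : SimpleGraph W) :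
    cand H (∅ : Finset W) = univ := by
  ext j
  simp [mem_cand]

lemma FP_empty {W : Type} [Fintype W] [DecidableEq W] (H : SimpleGraph W) :
    FP H (∅ : Finset W) = indepSets H := by
  rw [FP, cand_empty]
  exact Finset.filter_true_of_mem fun I _ => Finset.subset_univ I

lemma meanQ_eq {W : Type} [Fintype W] [DecidableEq W] (H : SimpleGraph W) (w : W → ℝ) :
    meanQ H w = (GS H w ∅)⁻¹ * ES H w ∅ := by
  rw [meanQ, GS, ES, FP_empty]
  rfl


end

theorem stmt15 {V : Type} [Fintype V] [DecidableEq V] (G : SimpleGraph V) (α : V → ℝ)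
    (hpos : ∀ i, 0 < α i) (hN : Ncond G α) (x : V) (by_ bz : ℝ)
    (hy : 0 < by_) (hz : 0 < bz) (hyz : by_ + bz = α x) :
    meanQ (Gyz G x) (betaArr α x by_ bz) = meanQ G α := by
  have hD := claimD G α x by_ bz hyz hy hz hN (cand G ∅).card ∅ le_rfl
    (fun a ha => absurd ha (Finset.notMem_empty a)) (Finset.notMem_empty x)
  rw [Finset.image_empty] at hD
  rw [meanQ_eq, meanQ_eq, hD.1, hD.2]
end

section
/- For every integer n ≥ 4 there exist a matching graph G on n vertices, a pair of distinct non-adjacent vertices (i*,j*) of G, and a vector α of positive reals with ∑_{i}α_i ≤ 1 satisfying Ncond for G, such that Q(Ḡ, α) > Q(G, α), where Ḡ is G with the edge (i*,j*) added; i.e., for every n > 3 there exist matching graphs with n nodes exhibiting a Braess paradox. -/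
open Classical Finset

section BraessAux
open Finset

-- ===== list/permutation helpers =====
lemma myPermPair {β : Type} {a b : β} {l : List β} (h : l.Perm [a,b]) :
    l = [a,b] ∨ l = [b,a] := by
  match l, h.length_eq with
  | [u, v], _ =>
    have hu : u = a ∨ u = b := by
      have := h.mem_iff (a := u); simp at this; tauto
    rcases hu with h1 | h1
    · subst h1; left
      have h2 : [v].Perm [b] := h.cons_inv
      rw [List.perm_singleton] at h2; rw [h2]
    · subst h1; right
      have h2 : [v].Perm [a] := (h.trans (List.Perm.swap u a [])).cons_inv
      rw [List.perm_singleton] at h2; rw [h2]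

lemma toListPairPerm {β : Type} [DecidableEq β] {a b : β} (hab : a ≠ b) :
    (({a,b} : Finset β).toList).Perm [a,b] := by
  have h1 : (({a,b} : Finset β).toList : Multiset β) = ({a,b} : Finset β).val :=
    Finset.coe_toList _
  have h2 : ({a,b} : Finset β).val = ([a,b] : List β) := by
    rw [Finset.insert_val, Multiset.ndinsert_of_notMem (by simpa using hab)]
    rfl
  exact Quotient.exact (h1.trans h2)

lemma pairPerms {β : Type} [DecidableEq β] {a b : β} (hab : a ≠ b) :
    ({a,b} : Finset β).toList.permutations.toFinset = ({[a,b],[b,a]} : Finset (List β)) := by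
  ext l
  simp only [List.mem_toFinset, List.mem_permutations, Finset.mem_insert, Finset.mem_singleton]
  constructor
  · intro h; exact myPermPair (h.trans (toListPairPerm hab))
  · rintro (rfl | rfl)
    · exact (toListPairPerm hab).symm
    · exact (List.Perm.swap a b []).trans (toListPairPerm hab).symm

-- ===== generic TI / EI computations =====
section TIEI
variable {V : Type} [Fintype V] [DecidableEq V] (G : SimpleGraph V) (α : V → ℝ)

lemma permsingle (i : V) :
    ({i} : Finset V).toList.permutations.toFinset = ({[i]} : Finset (List V)) := by
  rw [Finset.toList_singleton]
  have h : ([i] : List V).permutations = [[i]] := by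
    simp [List.permutations, List.permutationsAux_cons, List.permutationsAux_nil,
      List.permutations_nil, List.permutationsAux2]
  rw [h]
  rfl

lemma TI_single (i : V) : TI G α {i} = α i / (aSum α (nbr G {i}) - α i) := by
  rw [TI, permsingle, Finset.sum_singleton]
  simp [Tlist, aSum]

lemma EI_single (i : V) : EI G α {i} =
    aSum α (nbr G {i}) / (aSum α (nbr G {i}) - α i) * (α i / (aSum α (nbr G {i}) - α i)) := by
  rw [EI, permsingle, Finset.sum_singleton]
  simp [Tlist, Erat, aSum]

lemma TI_pair {a b : V} (hab : a ≠ b) : TI G α {a,b} =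
    α a / (aSum α (nbr G {a}) - α a) * (α b / (aSum α (nbr G {a,b}) - (α a + α b))) +
    α b / (aSum α (nbr G {b}) - α b) * (α a / (aSum α (nbr G {a,b}) - (α a + α b))) := by
  rw [TI, pairPerms hab, Finset.sum_pair (by simp [hab])]
  have h1 : insert b ({a} : Finset V) = {a,b} := Finset.pair_comm b a
  have h2 : insert a ({b} : Finset V) = {a,b} := rfl
  have sa : aSum α ({a} : Finset V) = α a := by rw [aSum, Finset.sum_singleton]
  have sb : aSum α ({b} : Finset V) = α b := by rw [aSum, Finset.sum_singleton]
  have sab : aSum α ({a,b} : Finset V) = α a + α b := by rw [aSum, Finset.sum_pair hab]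
  simp only [Tlist, LawfulSingleton.insert_empty_eq, h1, h2, mul_one, sa, sb, sab]

lemma EI_pair {a b : V} (hab : a ≠ b) : EI G α {a,b} =
    (aSum α (nbr G {a}) / (aSum α (nbr G {a}) - α a) +
     aSum α (nbr G {a,b}) / (aSum α (nbr G {a,b}) - (α a + α b))) *
      (α a / (aSum α (nbr G {a}) - α a) * (α b / (aSum α (nbr G {a,b}) - (α a + α b)))) +
    (aSum α (nbr G {b}) / (aSum α (nbr G {b}) - α b) +
     aSum α (nbr G {a,b}) / (aSum α (nbr G {a,b}) - (α a + α b))) *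
      (α b / (aSum α (nbr G {b}) - α b) * (α a / (aSum α (nbr G {a,b}) - (α a + α b)))) := by
  rw [EI, pairPerms hab, Finset.sum_pair (by simp [hab])]
  have h1 : insert b ({a} : Finset V) = {a,b} := Finset.pair_comm b a
  have h2 : insert a ({b} : Finset V) = {a,b} := rfl
  have sa : aSum α ({a} : Finset V) = α a := by rw [aSum, Finset.sum_singleton]
  have sb : aSum α ({b} : Finset V) = α b := by rw [aSum, Finset.sum_singleton]
  have sab : aSum α ({a,b} : Finset V) = α a + α b := by rw [aSum, Finset.sum_pair hab]
  simp only [Tlist, Erat, LawfulSingleton.insert_empty_eq, h1, h2, mul_one, add_zero, sa, sb, sab]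

end TIEI

-- ===== the concrete graph and weights =====
noncomputable def Gr (n : ℕ) : SimpleGraph (Fin n) where
  Adj i j := i ≠ j ∧ ¬(i.val < 2 ∧ j.val < 2)
  symm := by constructor; intro i j h; exact ⟨h.1.symm, fun hc => h.2 ⟨hc.2, hc.1⟩⟩
  loopless := by constructor; intro i h; exact h.1 rfl

noncomputable def eN (n : ℕ) : ℝ := ((1000 : ℝ) * ((n : ℝ) - 4))⁻¹
noncomputable def EN (n : ℕ) : ℝ := ((n : ℝ) - 4) * eN n

noncomputable def alp (n : ℕ) : Fin n → ℝ := fun i =>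
  if i.val < 2 then 1/100 else if i.val < 4 then 1/8 else eN n

lemma Gr_adj {n : ℕ} {i j : Fin n} :
    (Gr n).Adj i j ↔ i ≠ j ∧ ¬(i.val < 2 ∧ j.val < 2) := Iff.rfl

lemma EN_cases (n : ℕ) (hn : 4 ≤ n) :
    (EN n = 0 ∧ eN n = 0) ∨ (EN n = 1/1000 ∧ 0 < eN n ∧ eN n ≤ 1/1000) := by
  rcases eq_or_lt_of_le hn with h4 | h5
  · left
    have : (n : ℝ) - 4 = 0 := by rw [← h4]; norm_num
    constructor
    · rw [EN, this, zero_mul]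
    · rw [eN, this, mul_zero, inv_zero]
  · right
    have h1 : (1 : ℝ) ≤ (n : ℝ) - 4 := by
      have : (5 : ℕ) ≤ n := h5
      have := Nat.cast_le (α := ℝ).mpr this
      push_cast at this ⊢; linarith
    have h0 : (0 : ℝ) < (n : ℝ) - 4 := by linarith
    have he : 0 < eN n := by rw [eN]; positivity
    refine ⟨?_, he, ?_⟩
    · rw [EN, eN]; field_simp
    · rw [eN]
      rw [show (1:ℝ)/1000 = ((1000:ℝ))⁻¹ by norm_num]
      apply inv_anti₀ (by norm_num)
      nlinarith

lemma alp_lo {n : ℕ} {i : Fin n} (h : i.val < 2) : alp n i = 1/100 := if_pos h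

lemma alp_mid {n : ℕ} {i : Fin n} (h1 : 2 ≤ i.val) (h2 : i.val < 4) : alp n i = 1/8 := by
  rw [alp]; rw [if_neg (by omega), if_pos h2]

lemma alp_hi {n : ℕ} {i : Fin n} (h : 4 ≤ i.val) : alp n i = eN n := by
  rw [alp]; rw [if_neg (by omega), if_neg (by omega)]

-- sum over Fin n of a class function
lemma sum_classes {n : ℕ} (hn : 4 ≤ n) (F : Fin n → ℝ) (c1 c2 c3 : ℝ)
    (h1 : ∀ i : Fin n, i.val < 2 → F i = c1)
    (h2 : ∀ i : Fin n, 2 ≤ i.val → i.val < 4 → F i = c2)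
    (h3 : ∀ i : Fin n, 4 ≤ i.val → F i = c3) :
    ∑ i, F i = 2*c1 + 2*c2 + ((n : ℝ) - 4)*c3 := by
  have step1 : ∑ i, F i = ∑ i : Fin n, (fun k : ℕ =>
      if k < 2 then c1 else if k < 4 then c2 else c3) i.val := by
    refine Finset.sum_congr rfl fun i _ => ?_
    by_cases ha : i.val < 2
    · rw [h1 i ha]; simp [ha]
    · by_cases hb : i.val < 4
      · rw [h2 i (by omega) hb]; simp [ha, hb]
      · rw [h3 i (by omega)]; simp [ha, hb]
  rw [step1, Fin.sum_univ_eq_sum_range (fun k : ℕ => if k < 2 then c1 else if k < 4 then c2 else c3) n]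
  rw [Finset.range_eq_Ico, ← Finset.sum_Ico_consecutive _ (Nat.zero_le 4) hn]
  have hA : ∑ k ∈ Finset.Ico 0 4, (fun k : ℕ =>
      if k < 2 then c1 else if k < 4 then c2 else c3) k = 2*c1 + 2*c2 := by
    rw [← Finset.range_eq_Ico]
    rw [Finset.sum_range_succ, Finset.sum_range_succ, Finset.sum_range_succ,
      Finset.sum_range_one]
    norm_num; ring
  have hB : ∑ k ∈ Finset.Ico 4 n, (fun k : ℕ =>
      if k < 2 then c1 else if k < 4 then c2 else c3) k = ((n : ℝ) - 4)*c3 := by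
    have : ∀ k ∈ Finset.Ico 4 n, (fun k : ℕ =>
        if k < 2 then c1 else if k < 4 then c2 else c3) k = c3 := by
      intro k hk
      rw [Finset.mem_Ico] at hk
      simp only []
      rw [if_neg (by omega), if_neg (by omega)]
    rw [Finset.sum_congr rfl this, Finset.sum_const, Nat.card_Ico, nsmul_eq_mul]
    congr 1
    rw [Nat.cast_sub hn]; norm_num
  rw [hA, hB]

lemma aSum_univ {n : ℕ} (hn : 4 ≤ n) :
    aSum (alp n) Finset.univ = 27/100 + EN n := by
  rw [aSum, sum_classes hn (alp n) (1/100) (1/8) (eN n)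
    (fun i h => alp_lo h) (fun i h1 h2 => alp_mid h1 h2) (fun i h => alp_hi h)]
  rw [EN]; ring

end BraessAux
section BraessAux2
open Finset

variable {n : ℕ}

lemma bar_adj {z o : Fin n} (hz : z.val = 0) (ho : o.val = 1) (i j : Fin n) :
    (addEdge (Gr n) z o).Adj i j ↔ i ≠ j := by
  simp only [addEdge, SimpleGraph.sup_adj, SimpleGraph.fromEdgeSet_adj,
    Set.mem_singleton_iff, Gr_adj]
  constructor
  · rintro (h | h)
    · exact h.1
    · exact h.2
  · intro hij
    by_cases hc : i.val < 2 ∧ j.val < 2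
    · right
      refine ⟨?_, hij⟩
      rw [Sym2.eq_iff]
      have hij' : i.val ≠ j.val := fun h => hij (Fin.ext h)
      have : (i.val = 0 ∧ j.val = 1) ∨ (i.val = 1 ∧ j.val = 0) := by omega
      rcases this with ⟨h1, h2⟩ | ⟨h1, h2⟩
      · left; exact ⟨Fin.ext (by rw [h1, hz]), Fin.ext (by rw [h2, ho])⟩
      · right; exact ⟨Fin.ext (by rw [h1, ho]), Fin.ext (by rw [h2, hz])⟩
    · left; exact ⟨hij, hc⟩

lemma nbr_bar_single {z o : Fin n} (hz : z.val = 0) (ho : o.val = 1) (i : Fin n) :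
    nbr (addEdge (Gr n) z o) {i} = Finset.univ.erase i := by
  ext j
  simp only [nbr, Finset.mem_filter, Finset.mem_univ, true_and, Finset.mem_singleton,
    Finset.mem_erase, and_true, bar_adj hz ho]
  constructor
  · rintro ⟨k, rfl, h⟩; exact fun hji => h hji.symm
  · intro h; exact ⟨i, rfl, fun hij => h hij.symm⟩

lemma nbr_G_single_lo {i : Fin n} (hi : i.val < 2) :
    nbr (Gr n) {i} = Finset.univ.filter (fun j => 2 ≤ j.val) := by
  ext j
  simp only [nbr, Finset.mem_filter, Finset.mem_univ, true_and, Finset.mem_singleton, Gr_adj]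
  constructor
  · rintro ⟨k, rfl, hne, hc⟩; omega
  · intro hj
    exact ⟨i, rfl, fun h => by rw [Fin.ext_iff] at h; omega, by omega⟩

lemma nbr_G_single_hi {i : Fin n} (hi : 2 ≤ i.val) :
    nbr (Gr n) {i} = Finset.univ.erase i := by
  ext j
  simp only [nbr, Finset.mem_filter, Finset.mem_univ, true_and, Finset.mem_singleton,
    Finset.mem_erase, and_true, Gr_adj]
  constructor
  · rintro ⟨k, rfl, hne, hc⟩; exact fun hji => hne hji.symm
  · intro h; exact ⟨i, rfl, fun hij => h hij.symm, by omega⟩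

lemma nbr_G_pair {z o : Fin n} (hz : z.val = 0) (ho : o.val = 1) :
    nbr (Gr n) {z, o} = Finset.univ.filter (fun j => 2 ≤ j.val) := by
  ext j
  simp only [nbr, Finset.mem_filter, Finset.mem_univ, true_and, Finset.mem_insert,
    Finset.mem_singleton, Gr_adj]
  constructor
  · rintro ⟨k, hk | hk, hne, hc⟩ <;> subst hk <;> omega
  · intro hj
    exact ⟨z, Or.inl rfl, fun h => by rw [Fin.ext_iff] at h; omega, by omega⟩

lemma aSum_erase_s17 (hn : 4 ≤ n) (i : Fin n) :
    aSum (alp n) (Finset.univ.erase i) = (27/100 + EN n) - alp n i := by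
  rw [aSum, Finset.sum_erase_eq_sub (Finset.mem_univ i), ← aSum, aSum_univ hn]

lemma aSum_filter2 (hn : 4 ≤ n) {z o : Fin n} (hz : z.val = 0) (ho : o.val = 1) :
    aSum (alp n) (Finset.univ.filter (fun j => 2 ≤ j.val)) = (27/100 + EN n) - 1/50 := by
  have hzo : o ≠ z := fun h => by rw [Fin.ext_iff, hz, ho] at h; omega
  have hset : Finset.univ.filter (fun j : Fin n => 2 ≤ j.val) =
      (Finset.univ.erase z).erase o := by
    ext j
    simp only [Finset.mem_filter, Finset.mem_univ, true_and, Finset.mem_erase, and_true]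
    simp only [ne_eq, Fin.ext_iff, hz, ho]
    omega
  rw [aSum, hset, Finset.sum_erase_eq_sub (by simp [hzo]),
    Finset.sum_erase_eq_sub (Finset.mem_univ z), ← aSum, aSum_univ hn,
    alp_lo (by omega), alp_lo (by omega)]
  ring

lemma indep_bar {z o : Fin n} (hz : z.val = 0) (ho : o.val = 1) :
    indepSets (addEdge (Gr n) z o) =
      Finset.univ.image (fun i => ({i} : Finset (Fin n))) := by
  ext I
  rw [indepSets, Finset.mem_filter]
  simp only [indepSets, Finset.mem_filter, Finset.mem_univ, true_and, IsIndep,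
    Finset.mem_image]
  constructor
  · rintro ⟨⟨x, hx⟩, h2⟩
    refine ⟨x, ?_⟩
    symm
    rw [Finset.eq_singleton_iff_unique_mem]
    refine ⟨hx, fun y hy => ?_⟩
    have := h2 y hy x hx
    rw [bar_adj hz ho] at this
    exact not_not.mp this
  · rintro ⟨x, rfl⟩
    refine ⟨⟨x, Finset.mem_singleton_self x⟩, ?_⟩
    intro i hi j hj
    rw [Finset.mem_singleton] at hi hj
    subst hi; subst hj
    rw [bar_adj hz ho]
    simp

lemma indep_G (hn : 4 ≤ n) {z o : Fin n} (hz : z.val = 0) (ho : o.val = 1) :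
    indepSets (Gr n) =
      (Finset.univ.image fun i => ({i} : Finset (Fin n))) ∪ {({z,o} : Finset (Fin n))} := by
  ext I
  rw [indepSets, Finset.mem_filter]
  simp only [indepSets, Finset.mem_filter, Finset.mem_univ, true_and, IsIndep,
    Finset.mem_union, Finset.mem_image, Finset.mem_singleton]
  constructor
  · rintro ⟨⟨x, hx⟩, h2⟩
    by_cases hI : ∀ y ∈ I, y = x
    · left
      exact ⟨x, (Finset.eq_singleton_iff_unique_mem.mpr ⟨hx, hI⟩).symm⟩
    · right
      push_neg at hI
      obtain ⟨y, hy, hyx⟩ := hI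
      have hadj := h2 y hy x hx
      rw [Gr_adj] at hadj
      push_neg at hadj
      have hlt := hadj hyx
      -- y.val < 2 and x.val < 2, y ≠ x
      have hyv : y.val < 2 := hlt.1
      have hxv : x.val < 2 := hlt.2
      have hvne : y.val ≠ x.val := fun h => hyx (Fin.ext h)
      have hsub : I ⊆ {x, y} := by
        intro k hk
        rw [Finset.mem_insert, Finset.mem_singleton]
        by_contra hknot
        push_neg at hknot
        have hadjk := h2 k hk x hx
        rw [Gr_adj] at hadjk
        push_neg at hadjk
        have hkv : k.val < 2 := (hadjk hknot.1).1
        have h1 : k.val ≠ x.val := fun h => hknot.1 (Fin.ext h)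
        have h2' : k.val ≠ y.val := fun h => hknot.2 (Fin.ext h)
        omega
      have heq : I = {x, y} := by
        apply Finset.Subset.antisymm hsub
        intro k hk
        rw [Finset.mem_insert, Finset.mem_singleton] at hk
        rcases hk with rfl | rfl
        · exact hx
        · exact hy
      rw [heq]
      have : (x.val = 0 ∧ y.val = 1) ∨ (x.val = 1 ∧ y.val = 0) := by omega
      rcases this with ⟨h1, h2''⟩ | ⟨h1, h2''⟩
      · have hxz : x = z := Fin.ext (by rw [h1, hz])
        have hyo : y = o := Fin.ext (by rw [h2'', ho])
        rw [hxz, hyo]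
      · have hxo : x = o := Fin.ext (by rw [h1, ho])
        have hyz : y = z := Fin.ext (by rw [h2'', hz])
        rw [hxo, hyz, Finset.pair_comm]
  · rintro (⟨x, rfl⟩ | rfl)
    · refine ⟨⟨x, Finset.mem_singleton_self x⟩, ?_⟩
      intro i hi j hj
      rw [Finset.mem_singleton] at hi hj
      subst hi; subst hj
      rw [Gr_adj]
      simp
    · refine ⟨⟨z, Finset.mem_insert_self z _⟩, ?_⟩
      intro i hi j hj
      rw [Finset.mem_insert, Finset.mem_singleton] at hi hj
      rw [Gr_adj]
      rintro ⟨hne, hc⟩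
      apply hc
      rcases hi with rfl | rfl <;> rcases hj with rfl | rfl <;> omega

lemma pair_not_single {z o : Fin n} (hz : z.val = 0) (ho : o.val = 1) :
    ({z,o} : Finset (Fin n)) ∉ Finset.univ.image (fun i => ({i} : Finset (Fin n))) := by
  simp only [Finset.mem_image, Finset.mem_univ, true_and, not_exists]
  intro x hx
  have hzo : z ≠ o := fun h => by rw [Fin.ext_iff, hz, ho] at h; omega
  have h1 : z ∈ ({x} : Finset (Fin n)) := by rw [hx]; exact Finset.mem_insert_self z _
  have h2 : o ∈ ({x} : Finset (Fin n)) := by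
    rw [hx]; exact Finset.mem_insert_of_mem (Finset.mem_singleton_self o)
  rw [Finset.mem_singleton] at h1 h2
  exact hzo (h1.trans h2.symm)

lemma sum_indep_bar {z o : Fin n} (hz : z.val = 0) (ho : o.val = 1)
    (f : Finset (Fin n) → ℝ) :
    ∑ I ∈ indepSets (addEdge (Gr n) z o), f I = ∑ i, f {i} := by
  rw [indep_bar hz ho, Finset.sum_image]
  intro x _ y _ h
  exact Finset.singleton_injective h

lemma sum_indep_G (hn : 4 ≤ n) {z o : Fin n} (hz : z.val = 0) (ho : o.val = 1)
    (f : Finset (Fin n) → ℝ) :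
    ∑ I ∈ indepSets (Gr n), f I = (∑ i, f {i}) + f {z,o} := by
  rw [indep_G hn hz ho, Finset.sum_union (by
    rw [Finset.disjoint_singleton_right]
    exact pair_not_single hz ho),
    Finset.sum_image (fun x _ y _ h => Finset.singleton_injective h),
    Finset.sum_singleton]

end BraessAux2
section BraessAux3
open Finset

noncomputable def sGf (e E : ℝ) : ℝ :=
  2*((1/100)/(27/100 + E - 1/50 - 1/100)) + 2*((1/8)/(27/100 + E - 1/8 - 1/8)) +
  E/(27/100 + E - e - e) +
  2*((1/100)/(27/100 + E - 1/50 - 1/100) * ((1/100)/(27/100 + E - 1/50 - (1/100 + 1/100))))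

noncomputable def nGf (e E : ℝ) : ℝ :=
  2*((27/100 + E - 1/50)/(27/100 + E - 1/50 - 1/100) * ((1/100)/(27/100 + E - 1/50 - 1/100))) +
  2*((27/100 + E - 1/8)/(27/100 + E - 1/8 - 1/8) * ((1/8)/(27/100 + E - 1/8 - 1/8))) +
  (27/100 + E - e)/(27/100 + E - e - e) * (E/(27/100 + E - e - e)) +
  2*(((27/100 + E - 1/50)/(27/100 + E - 1/50 - 1/100) +
      (27/100 + E - 1/50)/(27/100 + E - 1/50 - (1/100 + 1/100))) *
     ((1/100)/(27/100 + E - 1/50 - 1/100) * ((1/100)/(27/100 + E - 1/50 - (1/100 + 1/100)))))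

noncomputable def sBf (e E : ℝ) : ℝ :=
  2*((1/100)/(27/100 + E - 1/100 - 1/100)) + 2*((1/8)/(27/100 + E - 1/8 - 1/8)) +
  E/(27/100 + E - e - e)

noncomputable def nBf (e E : ℝ) : ℝ :=
  2*((27/100 + E - 1/100)/(27/100 + E - 1/100 - 1/100) *
      ((1/100)/(27/100 + E - 1/100 - 1/100))) +
  2*((27/100 + E - 1/8)/(27/100 + E - 1/8 - 1/8) * ((1/8)/(27/100 + E - 1/8 - 1/8))) +
  (27/100 + E - e)/(27/100 + E - e - e) * (E/(27/100 + E - e - e))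

variable {n : ℕ}

lemma zo_ne {z o : Fin n} (hz : z.val = 0) (ho : o.val = 1) : z ≠ o :=
  fun h => by rw [Fin.ext_iff, hz, ho] at h; omega

lemma sumT_G (hn : 4 ≤ n) {z o : Fin n} (hz : z.val = 0) (ho : o.val = 1) :
    ∑ I ∈ indepSets (Gr n), TI (Gr n) (alp n) I = sGf (eN n) (EN n) := by
  have hzo := zo_ne hz ho
  rw [sum_indep_G hn hz ho]
  rw [sum_classes hn (fun i => TI (Gr n) (alp n) {i})
      ((1/100)/(27/100 + EN n - 1/50 - 1/100))
      ((1/8)/(27/100 + EN n - 1/8 - 1/8))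
      ((eN n)/(27/100 + EN n - eN n - eN n))
      (fun i hi => by show _ = _; beta_reduce; rw [TI_single, nbr_G_single_lo hi, aSum_filter2 hn hz ho, alp_lo hi])
      (fun i h1 h2 => by show _ = _; beta_reduce; rw [TI_single, nbr_G_single_hi h1, aSum_erase_s17 hn, alp_mid h1 h2])
      (fun i h => by show _ = _; beta_reduce; rw [TI_single, nbr_G_single_hi (by omega), aSum_erase_s17 hn, alp_hi h])]
  rw [TI_pair _ _ hzo, nbr_G_single_lo (by omega : z.val < 2),
    nbr_G_single_lo (by omega : o.val < 2), nbr_G_pair hz ho, aSum_filter2 hn hz ho,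
    alp_lo (by omega : z.val < 2), alp_lo (by omega : o.val < 2)]
  simp only [sGf, EN]
  ring

lemma sumE_G (hn : 4 ≤ n) {z o : Fin n} (hz : z.val = 0) (ho : o.val = 1) :
    ∑ I ∈ indepSets (Gr n), EI (Gr n) (alp n) I = nGf (eN n) (EN n) := by
  have hzo := zo_ne hz ho
  rw [sum_indep_G hn hz ho]
  rw [sum_classes hn (fun i => EI (Gr n) (alp n) {i})
      ((27/100 + EN n - 1/50)/(27/100 + EN n - 1/50 - 1/100) *
        ((1/100)/(27/100 + EN n - 1/50 - 1/100)))
      ((27/100 + EN n - 1/8)/(27/100 + EN n - 1/8 - 1/8) *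
        ((1/8)/(27/100 + EN n - 1/8 - 1/8)))
      ((27/100 + EN n - eN n)/(27/100 + EN n - eN n - eN n) *
        ((eN n)/(27/100 + EN n - eN n - eN n)))
      (fun i hi => by show _ = _; beta_reduce; rw [EI_single, nbr_G_single_lo hi, aSum_filter2 hn hz ho, alp_lo hi])
      (fun i h1 h2 => by show _ = _; beta_reduce; rw [EI_single, nbr_G_single_hi h1, aSum_erase_s17 hn, alp_mid h1 h2])
      (fun i h => by show _ = _; beta_reduce; rw [EI_single, nbr_G_single_hi (by omega), aSum_erase_s17 hn, alp_hi h])]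
  rw [EI_pair _ _ hzo, nbr_G_single_lo (by omega : z.val < 2),
    nbr_G_single_lo (by omega : o.val < 2), nbr_G_pair hz ho, aSum_filter2 hn hz ho,
    alp_lo (by omega : z.val < 2), alp_lo (by omega : o.val < 2)]
  simp only [nGf, EN]
  ring

lemma sumT_B (hn : 4 ≤ n) {z o : Fin n} (hz : z.val = 0) (ho : o.val = 1) :
    ∑ I ∈ indepSets (addEdge (Gr n) z o), TI (addEdge (Gr n) z o) (alp n) I =
      sBf (eN n) (EN n) := by
  rw [sum_indep_bar hz ho]
  rw [sum_classes hn (fun i => TI (addEdge (Gr n) z o) (alp n) {i})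
      ((1/100)/(27/100 + EN n - 1/100 - 1/100))
      ((1/8)/(27/100 + EN n - 1/8 - 1/8))
      ((eN n)/(27/100 + EN n - eN n - eN n))
      (fun i hi => by show _ = _; beta_reduce; rw [TI_single, nbr_bar_single hz ho, aSum_erase_s17 hn, alp_lo hi])
      (fun i h1 h2 => by show _ = _; beta_reduce; rw [TI_single, nbr_bar_single hz ho, aSum_erase_s17 hn, alp_mid h1 h2])
      (fun i h => by show _ = _; beta_reduce; rw [TI_single, nbr_bar_single hz ho, aSum_erase_s17 hn, alp_hi h])]
  simp only [sBf, EN]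
  ring

lemma sumE_B (hn : 4 ≤ n) {z o : Fin n} (hz : z.val = 0) (ho : o.val = 1) :
    ∑ I ∈ indepSets (addEdge (Gr n) z o), EI (addEdge (Gr n) z o) (alp n) I =
      nBf (eN n) (EN n) := by
  rw [sum_indep_bar hz ho]
  rw [sum_classes hn (fun i => EI (addEdge (Gr n) z o) (alp n) {i})
      ((27/100 + EN n - 1/100)/(27/100 + EN n - 1/100 - 1/100) *
        ((1/100)/(27/100 + EN n - 1/100 - 1/100)))
      ((27/100 + EN n - 1/8)/(27/100 + EN n - 1/8 - 1/8) *
        ((1/8)/(27/100 + EN n - 1/8 - 1/8)))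
      ((27/100 + EN n - eN n)/(27/100 + EN n - eN n - eN n) *
        ((eN n)/(27/100 + EN n - eN n - eN n)))
      (fun i hi => by show _ = _; beta_reduce; rw [EI_single, nbr_bar_single hz ho, aSum_erase_s17 hn, alp_lo hi])
      (fun i h1 h2 => by show _ = _; beta_reduce; rw [EI_single, nbr_bar_single hz ho, aSum_erase_s17 hn, alp_mid h1 h2])
      (fun i h => by show _ = _; beta_reduce; rw [EI_single, nbr_bar_single hz ho, aSum_erase_s17 hn, alp_hi h])]
  simp only [nBf, EN]
  ring

set_option maxHeartbeats 2000000 in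
lemma keyineq (e E : ℝ)
    (hcase : (E = 0 ∧ e = 0) ∨ (E = 1/1000 ∧ 0 < e ∧ e ≤ 1/1000)) :
    (1 + sGf e E)⁻¹ * nGf e E < (1 + sBf e E)⁻¹ * nBf e E := by
  rcases hcase with ⟨hE, he⟩ | ⟨hE, he1, he2⟩
  · subst hE; subst he
    simp only [sGf, nGf, sBf, nBf]
    norm_num
  · subst hE
    have hDpos : (0:ℝ) < 27/100 + 1/1000 - e - e := by linarith
    have hD1 : (269:ℝ)/1000 ≤ 27/100 + 1/1000 - e - e := by linarith
    have hD2 : 27/100 + 1/1000 - e - e ≤ 271/1000 := by linarith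
    have hu1 : (1:ℝ)/271 ≤ (1/1000:ℝ)/(27/100 + 1/1000 - e - e) := by
      rw [le_div_iff₀ hDpos]; linarith
    have hu2 : (1/1000:ℝ)/(27/100 + 1/1000 - e - e) ≤ 1/269 := by
      rw [div_le_iff₀ hDpos]; linarith
    have hDD1 : (27/100 + 1/1000 - e - e)*(27/100 + 1/1000 - e - e) ≤
        (271/1000)*(271/1000) := by nlinarith
    have hDD2 : (269/1000 : ℝ)*(269/1000) ≤
        (27/100 + 1/1000 - e - e)*(27/100 + 1/1000 - e - e) := by nlinarith
    have hv1 : (270:ℝ)/73441 ≤ (27/100 + 1/1000 - e)/(27/100 + 1/1000 - e - e) *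
        ((1/1000)/(27/100 + 1/1000 - e - e)) := by
      rw [div_mul_div_comm, le_div_iff₀ (by positivity)]
      nlinarith
    have hv2 : (27/100 + 1/1000 - e)/(27/100 + 1/1000 - e - e) *
        ((1/1000)/(27/100 + 1/1000 - e - e)) ≤ 271/72361 := by
      rw [div_mul_div_comm, div_le_iff₀ (by positivity)]
      nlinarith
    have hposG : (0:ℝ) < 1 + sGf e (1/1000) := by
      simp only [sGf]; norm_num; linarith [hu1]
    have hposB : (0:ℝ) < 1 + sBf e (1/1000) := by
      simp only [sBf]; norm_num; linarith [hu1]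
    have hG : (1 + sGf e (1/1000))⁻¹ * nGf e (1/1000) < 6378/1000 := by
      rw [inv_mul_eq_div, div_lt_iff₀ hposG]
      simp only [sGf, nGf]
      nlinarith [hu1, hv2]
    have hB : (6378:ℝ)/1000 < (1 + sBf e (1/1000))⁻¹ * nBf e (1/1000) := by
      rw [inv_mul_eq_div, lt_div_iff₀ hposB]
      simp only [sBf, nBf]
      nlinarith [hu2, hv1]
    exact hG.trans hB

lemma ncondG (hn : 4 ≤ n) {z o : Fin n} (hz : z.val = 0) (ho : o.val = 1) :
    Ncond (Gr n) (alp n) := by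
  have hzo := zo_ne hz ho
  have hE : 0 ≤ EN n ∧ 0 ≤ eN n ∧ eN n ≤ 1/1000 := by
    rcases EN_cases n hn with ⟨h1, h2⟩ | ⟨h1, h2, h3⟩
    · rw [h1, h2]; norm_num
    · exact ⟨by rw [h1]; norm_num, le_of_lt h2, h3⟩
  obtain ⟨hE1, hE2, hE3⟩ := hE
  intro I hI
  rw [indep_G hn hz ho] at hI
  rw [Finset.mem_union, Finset.mem_image, Finset.mem_singleton] at hI
  rcases hI with ⟨i, -, rfl⟩ | rfl
  · rw [aSum, Finset.sum_singleton]
    by_cases h1 : i.val < 2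
    · rw [nbr_G_single_lo h1, aSum_filter2 hn hz ho, alp_lo h1]; linarith
    · by_cases h2 : i.val < 4
      · rw [nbr_G_single_hi (by omega), aSum_erase_s17 hn, alp_mid (by omega) h2]; linarith
      · rw [nbr_G_single_hi (by omega), aSum_erase_s17 hn, alp_hi (by omega)]; linarith
  · rw [aSum, Finset.sum_pair hzo, nbr_G_pair hz ho, aSum_filter2 hn hz ho,
      alp_lo (by omega : z.val < 2), alp_lo (by omega : o.val < 2)]
    linarith

end BraessAux3
theorem stmt17 (n : ℕ) (hn : 4 ≤ n) :
    ∃ (G : SimpleGraph (Fin n)) (istar jstar : Fin n) (α : Fin n → ℝ),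
      istar ≠ jstar ∧ ¬ G.Adj istar jstar ∧
      (∀ i, 0 < α i) ∧ (∑ i, α i ≤ 1) ∧ Ncond G α ∧
      meanQ G α < meanQ (addEdge G istar jstar) α := by
  have h0 : 0 < n := by omega
  have h1 : 1 < n := by omega
  set z : Fin n := ⟨0, h0⟩ with hzdef
  set o : Fin n := ⟨1, h1⟩ with hodef
  have hz : z.val = 0 := rfl
  have ho : o.val = 1 := rfl
  have hzo := zo_ne hz ho
  refine ⟨Gr n, z, o, alp n, hzo, ?_, ?_, ?_, ncondG hn hz ho, ?_⟩
  · rw [Gr_adj]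
    rintro ⟨-, hc⟩
    exact hc ⟨by omega, by omega⟩
  · intro i
    rw [alp]
    split_ifs with ha hb
    · norm_num
    · norm_num
    · have h5 : 5 ≤ n := by have := i.isLt; omega
      rw [eN]
      apply inv_pos.mpr
      have h5' : (5:ℝ) ≤ (n:ℝ) := by exact_mod_cast h5
      nlinarith
  · have h := aSum_univ (n := n) hn
    rw [aSum] at h
    rw [h]
    rcases EN_cases n hn with ⟨h1', -⟩ | ⟨h1', -, -⟩ <;> rw [h1'] <;> norm_num
  · simp only [meanQ]
    rw [sumT_G hn hz ho, sumE_G hn hz ho, sumT_B hn hz ho, sumE_B hn hz ho]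
    apply keyineq
    rcases EN_cases n hn with h' | h'
    · exact Or.inl h'
    · exact Or.inr h'
end
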